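/- arXiv:1510.01947 — 13 statements merged into one kernel-verified Lean document; each statement's English description precedes it below -/
import Mathlib

section
/- Let R>0 and f:[0,R)→ℝ be continuously differentiable with f(0)>0, f'(0)=-1, f' convex and strictly increasing, and f(t)=0 for some t∈(0,R). Then f has a smallest root t* ∈ (0,R), and for all t ∈ [0,t*) one has f(t)>0, f'(t)<0, and t < t - f(t)/f'(t) < t*. -/
open Set

/-- a majorant function has a smallest root `t*` in `(0,R)`, and on
`[0,t*)` one has `f t > 0`, `f' t < 0` and `t < t - f t / f' t < t*`. -/
theorem stmt0 (R : ℝ) (hR : 0 < R) (f f' : ℝ → ℝ)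
    (hderiv : ∀ t ∈ Ico (0:ℝ) R, HasDerivWithinAt f (f' t) (Ico 0 R) t)
    (hcont : ContinuousOn f' (Ico 0 R))
    (h1 : 0 < f 0) (h1' : f' 0 = -1)
    (h2conv : ConvexOn ℝ (Ico 0 R) f')
    (h2mono : StrictMonoOn f' (Ico 0 R))
    (h3 : ∃ t ∈ Ioo (0:ℝ) R, f t = 0) :
    ∃ tstar ∈ Ioo (0:ℝ) R, f tstar = 0 ∧
      (∀ t ∈ Ioo (0:ℝ) R, f t = 0 → tstar ≤ t) ∧
      ∀ t ∈ Ico (0:ℝ) tstar,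
        0 < f t ∧ f' t < 0 ∧ t < t - f t / f' t ∧ t - f t / f' t < tstar := by
  obtain ⟨t0, ht0, hft0⟩ := h3
  have hfc : ContinuousOn f (Ico 0 R) := fun t ht => (hderiv t ht).continuousWithinAt
  set S : Set ℝ := Icc 0 t0 ∩ f ⁻¹' {0} with hS
  have hSne : S.Nonempty := ⟨t0, ⟨ht0.1.le, le_refl _⟩, hft0⟩
  have hSbdd : BddBelow S := ⟨0, fun x hx => hx.1.1⟩
  have hIccsub : Icc (0:ℝ) t0 ⊆ Ico 0 R := fun x hx => ⟨hx.1, lt_of_le_of_lt hx.2 ht0.2⟩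
  have hSclosed : IsClosed S :=
    (hfc.mono hIccsub).preimage_isClosed_of_isClosed isClosed_Icc isClosed_singleton
  set ts := sInf S with hts
  have hts_mem : ts ∈ S := hSclosed.csInf_mem hSne hSbdd
  have hfts : f ts = 0 := hts_mem.2
  have hts0 : 0 ≤ ts := hts_mem.1.1
  have htst0 : ts ≤ t0 := hts_mem.1.2
  have htsR : ts < R := lt_of_le_of_lt htst0 ht0.2
  have htspos : 0 < ts := by
    rcases hts0.lt_or_eq with h | h
    · exact h
    · exfalso; rw [← h] at hfts; linarith
  have hmin : ∀ t ∈ Ioo 0 R, f t = 0 → ts ≤ t := by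
    intro t ht hft
    by_contra h
    push_neg at h
    exact absurd (csInf_le hSbdd ⟨⟨ht.1.le, h.le.trans htst0⟩, hft⟩) (not_le.mpr h)
  have hpos : ∀ t ∈ Ico (0:ℝ) ts, 0 < f t := by
    intro t ht
    rcases lt_trichotomy (f t) 0 with hlt | heq | hgt
    · exfalso
      have ht0' : 0 < t := by
        rcases ht.1.lt_or_eq with h | h
        · exact h
        · exfalso; rw [← h] at hlt; linarith
      have hsub : Icc (0:ℝ) t ⊆ Ico 0 R := fun x hx =>
        ⟨hx.1, lt_of_le_of_lt hx.2 (ht.2.trans htsR)⟩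
      have h0mem : (0:ℝ) ∈ Ioo (f t) (f 0) := ⟨hlt, h1⟩
      obtain ⟨c, hc, hfc0⟩ := intermediate_value_Ioo' ht0'.le (hfc.mono hsub) h0mem
      have := hmin c ⟨hc.1, hc.2.trans (ht.2.trans htsR)⟩ hfc0
      linarith [hc.2, ht.2]
    · exfalso
      have ht0' : 0 < t := by
        rcases ht.1.lt_or_eq with h | h
        · exact h
        · exfalso; rw [← h] at heq; linarith
      exact absurd (hmin t ⟨ht0', ht.2.trans htsR⟩ heq) (not_le.mpr ht.2)
    · exact hgt
  have hmvt : ∀ t ∈ Ico (0:ℝ) ts, ∃ c ∈ Ioo t ts, f' c = (f ts - f t) / (ts - t) := by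
    intro t ht
    apply exists_hasDerivAt_eq_slope f f' ht.2
    · exact hfc.mono fun x hx => ⟨ht.1.trans hx.1, lt_of_le_of_lt hx.2 htsR⟩
    · intro x hx
      have hx1 : 0 < x := lt_of_le_of_lt ht.1 hx.1
      have hx2 : x < R := hx.2.trans htsR
      exact (hderiv x ⟨hx1.le, hx2⟩).hasDerivAt (Ico_mem_nhds hx1 hx2)
  have hneg : ∀ t ∈ Ico (0:ℝ) ts, f' t < 0 := by
    intro t ht
    obtain ⟨c, hc, hceq⟩ := hmvt t ht
    have hcmem : c ∈ Ico (0:ℝ) R := ⟨ht.1.trans hc.1.le, hc.2.trans htsR⟩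
    have htmem : t ∈ Ico (0:ℝ) R := ⟨ht.1, ht.2.trans htsR⟩
    have hmono := h2mono htmem hcmem hc.1
    have hslope : f' c < 0 := by
      rw [hceq, hfts]
      apply div_neg_of_neg_of_pos
      · linarith [hpos t ht]
      · linarith [ht.2]
    linarith
  refine ⟨ts, ⟨htspos, htsR⟩, hfts, hmin, ?_⟩
  intro t ht
  have hft := hpos t ht
  have hf't := hneg t ht
  obtain ⟨c, hc, hceq⟩ := hmvt t ht
  have hstep1 : t < t - f t / f' t := by
    have : f t / f' t < 0 := div_neg_of_pos_of_neg hft hf't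
    linarith
  have hstrict : f' t < f' c :=
    h2mono ⟨ht.1, ht.2.trans htsR⟩ ⟨ht.1.trans hc.1.le, hc.2.trans htsR⟩ hc.1
  have hd : (0:ℝ) < ts - t := sub_pos.mpr ht.2
  have hceq' : f' c = -f t / (ts - t) := by rw [hceq, hfts]; ring
  have key : f' t * (ts - t) < -f t := by
    rw [hceq'] at hstrict
    calc f' t * (ts - t) < (-f t / (ts - t)) * (ts - t) :=
          mul_lt_mul_of_pos_right hstrict hd
      _ = -f t := div_mul_cancel₀ _ hd.ne'
  have hfin : -f t / f' t < ts - t := by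
    rw [div_lt_iff_of_neg hf't]
    linarith [key]
  rw [neg_div] at hfin
  exact ⟨hft, hf't, hstep1, by linarith⟩
end

section
/- Let f be a majorant function on [0,R) (f(0)>0, f'(0)=-1, f' convex and strictly increasing, f has a zero in (0,R)) with smallest root t*. Then f is strictly convex on [0,R), f'(t*) ≤ 0, and f'(t*) < 0 if and only if there exists t ∈ (t*, R) with f(t) < 0. -/
open Set

/-- a majorant function is strictly convex, `f'(t*) ≤ 0`, and
`f'(t*) < 0` iff `f` is negative somewhere in `(t*,R)`. -/
theorem stmt1 (R : ℝ) (hR : 0 < R) (f f' : ℝ → ℝ)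
    (hderiv : ∀ t ∈ Ico (0:ℝ) R, HasDerivWithinAt f (f' t) (Ico 0 R) t)
    (hcont : ContinuousOn f' (Ico 0 R))
    (h1 : 0 < f 0) (h1' : f' 0 = -1)
    (h2conv : ConvexOn ℝ (Ico 0 R) f')
    (h2mono : StrictMonoOn f' (Ico 0 R))
    (tstar : ℝ) (htstar : tstar ∈ Ioo (0:ℝ) R) (hroot : f tstar = 0)
    (hmin : ∀ t ∈ Ioo (0:ℝ) R, f t = 0 → tstar ≤ t) :
    StrictConvexOn ℝ (Ico (0:ℝ) R) f ∧ f' tstar ≤ 0 ∧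
      (f' tstar < 0 ↔ ∃ t ∈ Ioo tstar R, f t < 0) := by
  obtain ⟨ht0, htR⟩ := htstar
  have hfc : ContinuousOn f (Ico 0 R) := fun t ht => (hderiv t ht).continuousWithinAt
  -- deriv f = f' on the interior
  have hderiv' : ∀ x ∈ Ioo (0:ℝ) R, deriv f x = f' x := fun x hx =>
    ((hderiv x (Ioo_subset_Ico_self hx)).hasDerivAt
      (Ico_mem_nhds hx.1 hx.2)).deriv
  -- Part 1: strict convexity
  have part1 : StrictConvexOn ℝ (Ico (0:ℝ) R) f := by
    apply StrictMonoOn.strictConvexOn_of_deriv (convex_Ico 0 R) hfc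
    rw [interior_Ico]
    intro x hx y hy hxy
    rw [hderiv' x hx, hderiv' y hy]
    exact h2mono (Ioo_subset_Ico_self hx) (Ioo_subset_Ico_self hy) hxy
  -- f is positive on [0, t*)
  have hfpos : ∀ t ∈ Ico (0:ℝ) tstar, 0 < f t := by
    rintro t ⟨ht0', httstar⟩
    by_contra hle
    push_neg at hle
    have htR' : t < R := httstar.trans htR
    have hsub : Icc (0:ℝ) t ⊆ Ico 0 R := Icc_subset_Ico_right htR'
    have hIVT := intermediate_value_Icc' ht0' (hfc.mono hsub)
    have h0mem : (0:ℝ) ∈ Icc (f t) (f 0) := ⟨hle, h1.le⟩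
    obtain ⟨c, hc, hfc0⟩ := hIVT h0mem
    have hc0 : 0 < c := by
      rcases lt_or_eq_of_le hc.1 with h | h
      · exact h
      · exfalso; rw [← h] at hfc0; linarith
    have := hmin c ⟨hc0, lt_of_le_of_lt hc.2 htR'⟩ hfc0
    exact absurd (lt_of_le_of_lt hc.2 httstar) (not_lt.mpr this)
  -- Part 2: f' t* ≤ 0
  have part2 : f' tstar ≤ 0 := by
    by_contra hpos
    push_neg at hpos
    have hca : ContinuousAt f' tstar :=
      (hcont tstar ⟨ht0.le, htR⟩).continuousAt (Ico_mem_nhds ht0 htR)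
    have hev : ∀ᶠ x in nhds tstar, 0 < f' x ∧ x ∈ Ioo (0:ℝ) R :=
      (hca.eventually (eventually_gt_nhds hpos)).and
        (Filter.eventually_of_mem (isOpen_Ioo.mem_nhds ⟨ht0, htR⟩) fun _ h => h)
    obtain ⟨δ, hδ, hball⟩ := Metric.eventually_nhds_iff.mp hev
    set s := tstar - δ / 2 with hs
    have hsball : dist s tstar < δ := by
      simp only [hs, Real.dist_eq]
      rw [abs_of_nonpos (by linarith)]
      linarith
    have hsIoo : s ∈ Ioo (0:ℝ) R := (hball hsball).2
    have hslt : s < tstar := by simp only [hs]; linarith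
    have hmono : StrictMonoOn f (Icc s tstar) := by
      apply strictMonoOn_of_deriv_pos (convex_Icc s tstar)
        (hfc.mono fun x hx => ⟨le_trans hsIoo.1.le hx.1, lt_of_le_of_lt hx.2 htR⟩)
      rw [interior_Icc]
      intro x hx
      have hxball : dist x tstar < δ := by
        rw [Real.dist_eq, abs_of_nonpos (by linarith [hx.2])]
        have : s < x := hx.1
        simp only [hs] at this
        linarith
      rw [hderiv' x (hball hxball).2]
      exact (hball hxball).1
    have : f s < f tstar := hmono ⟨le_refl s, hslt.le⟩ ⟨hslt.le, le_refl tstar⟩ hslt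
    rw [hroot] at this
    exact absurd (hfpos s ⟨hsIoo.1.le, hslt⟩) (not_lt.mpr this.le)
  refine ⟨part1, part2, ?_, ?_⟩
  · -- f' t* < 0 → ∃ t ∈ Ioo t* R, f t < 0
    intro hneg
    have hca : ContinuousAt f' tstar :=
      (hcont tstar ⟨ht0.le, htR⟩).continuousAt (Ico_mem_nhds ht0 htR)
    have hev : ∀ᶠ x in nhds tstar, f' x < 0 ∧ x ∈ Ioo (0:ℝ) R :=
      (hca.eventually (eventually_lt_nhds hneg)).and
        (Filter.eventually_of_mem (isOpen_Ioo.mem_nhds ⟨ht0, htR⟩) fun _ h => h)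
    obtain ⟨δ, hδ, hball⟩ := Metric.eventually_nhds_iff.mp hev
    set u := tstar + min (δ / 2) ((R - tstar) / 2) with hu
    have hmin' : 0 < min (δ / 2) ((R - tstar) / 2) := lt_min (by linarith) (by linarith)
    have hule : min (δ / 2) ((R - tstar) / 2) ≤ δ / 2 := min_le_left _ _
    have hule2 : min (δ / 2) ((R - tstar) / 2) ≤ (R - tstar) / 2 := min_le_right _ _
    have hulow : tstar < u := by simp only [hu]; linarith
    have huR : u < R := by simp only [hu]; linarith
    have hanti : StrictAntiOn f (Icc tstar u) := by
      apply strictAntiOn_of_deriv_neg (convex_Icc tstar u)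
        (hfc.mono fun x hx => ⟨le_trans ht0.le hx.1, lt_of_le_of_lt hx.2 huR⟩)
      rw [interior_Icc]
      intro x hx
      have hxball : dist x tstar < δ := by
        rw [Real.dist_eq, abs_of_nonneg (by linarith [hx.1])]
        have : x < u := hx.2
        simp only [hu] at this
        linarith
      rw [hderiv' x (hball hxball).2]
      exact (hball hxball).1
    refine ⟨u, ⟨hulow, huR⟩, ?_⟩
    have : f u < f tstar := hanti ⟨le_refl tstar, hulow.le⟩ ⟨hulow.le, le_refl u⟩ hulow
    rwa [hroot] at this
  · -- ∃ t, f t < 0 → f' t* < 0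
    rintro ⟨t, ⟨htlt, htR'⟩, hft⟩
    by_contra hne
    have hzero : f' tstar = 0 := le_antisymm part2 (not_lt.mp hne)
    have hmono : StrictMonoOn f (Icc tstar t) := by
      apply strictMonoOn_of_deriv_pos (convex_Icc tstar t)
        (hfc.mono fun x hx => ⟨le_trans ht0.le hx.1, lt_of_le_of_lt hx.2 htR'⟩)
      rw [interior_Icc]
      intro x hx
      have hxIoo : x ∈ Ioo (0:ℝ) R := ⟨ht0.trans hx.1, hx.2.trans htR'⟩
      rw [hderiv' x hxIoo]
      have := h2mono ⟨ht0.le, htR⟩ (Ioo_subset_Ico_self hxIoo) hx.1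
      linarith [hzero]
    have : f tstar < f t := hmono ⟨le_refl tstar, htlt.le⟩ ⟨htlt.le, le_refl t⟩ htlt
    rw [hroot] at this
    linarith
end

section
/- Let f be a majorant function on [0,R) satisfying additionally f(t)<0 for some t∈(0,R). Define t̄ := sup{ t ∈ [0,R) : f'(t) < 0 } and β := sup{ -f(t) : t ∈ [0,R) }. Then f'(t) < 0 for every t ∈ [0, t̄), 0 < t* < t̄ ≤ R, β = -lim_{t→t̄⁻} f(t), and 0 < β < t̄. -/
open Set Filter Topology

/-- under (h4), with `t̄ = sup{t : f' t < 0}` and `β = sup{-f t}`,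
one has `f' < 0` on `[0,t̄)`, `0 < t* < t̄ ≤ R`, `β = -lim_{t→t̄⁻} f t` and `0 < β < t̄`. -/
theorem stmt2 (R : ℝ) (hR : 0 < R) (f f' : ℝ → ℝ)
    (hderiv : ∀ t ∈ Ico (0:ℝ) R, HasDerivWithinAt f (f' t) (Ico 0 R) t)
    (hcont : ContinuousOn f' (Ico 0 R))
    (h1 : 0 < f 0) (h1' : f' 0 = -1)
    (h2conv : ConvexOn ℝ (Ico 0 R) f')
    (h2mono : StrictMonoOn f' (Ico 0 R))
    (tstar : ℝ) (htstar : tstar ∈ Ioo (0:ℝ) R) (hroot : f tstar = 0)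
    (hmin : ∀ t ∈ Ioo (0:ℝ) R, f t = 0 → tstar ≤ t)
    (h4 : ∃ t ∈ Ioo (0:ℝ) R, f t < 0)
    (tbar : ℝ) (htbar : tbar = sSup {t ∈ Ico (0:ℝ) R | f' t < 0})
    (β : ℝ) (hβ : β = sSup ((fun t => -f t) '' Ico (0:ℝ) R)) :
    (∀ t ∈ Ico (0:ℝ) tbar, f' t < 0) ∧
      0 < tstar ∧ tstar < tbar ∧ tbar ≤ R ∧
      Tendsto f (𝓝[<] tbar) (𝓝 (-β)) ∧
      0 < β ∧ β < tbar := by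
  obtain ⟨t0, ht0, hft0⟩ := h4
  have hfc : ContinuousOn f (Ico 0 R) := fun t ht => (hderiv t ht).continuousWithinAt
  set S : Set ℝ := {t ∈ Ico (0:ℝ) R | f' t < 0} with hS
  have h0S : (0:ℝ) ∈ S := ⟨⟨le_refl 0, hR⟩, by rw [h1']; norm_num⟩
  have hSne : S.Nonempty := ⟨0, h0S⟩
  have hSbdd : BddAbove S := ⟨R, fun x hx => hx.1.2.le⟩
  have htbarR : tbar ≤ R := htbar ▸ csSup_le hSne fun x hx => hx.1.2.le
  have htbar0 : 0 ≤ tbar := htbar ▸ le_csSup hSbdd h0S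
  -- part 1 : f' < 0 on [0, tbar)
  have hneg : ∀ t ∈ Ico (0:ℝ) tbar, f' t < 0 := by
    intro t ht
    obtain ⟨s, hsS, hts⟩ := exists_lt_of_lt_csSup hSne (htbar ▸ ht.2)
    have htR : t ∈ Ico (0:ℝ) R := ⟨ht.1, hts.trans hsS.1.2⟩
    exact (h2mono htR hsS.1 hts).trans hsS.2
  -- derivative at interior points
  have hDA : ∀ x ∈ Ioo (0:ℝ) R, HasDerivAt f (f' x) x := fun x hx =>
    (hderiv x ⟨hx.1.le, hx.2⟩).hasDerivAt (Ico_mem_nhds hx.1 hx.2)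
  -- tstar < t0 via IVT
  have hts0 : tstar < t0 := by
    by_contra h
    push_neg at h
    have hne : t0 ≠ tstar := fun he => by rw [he, hroot] at hft0; exact lt_irrefl 0 hft0
    have h' : t0 < tstar := lt_of_le_of_ne h hne
    have hIcc : Icc (0:ℝ) t0 ⊆ Ico 0 R := Icc_subset_Ico_right ht0.2
    have := intermediate_value_Ioo' (le_of_lt ht0.1) (hfc.mono hIcc) (a := 0)
    have h0mem : (0:ℝ) ∈ Ioo (f t0) (f 0) := ⟨hft0, h1⟩
    obtain ⟨c, hc, hfc0⟩ := this h0mem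
    have := hmin c ⟨hc.1, hc.2.trans ht0.2⟩ hfc0
    linarith [hc.2]
  -- MVT gives a point past tstar where f' < 0
  have hIcc2 : Icc tstar t0 ⊆ Ico 0 R := fun x hx => ⟨htstar.1.le.trans hx.1, lt_of_le_of_lt hx.2 ht0.2⟩
  obtain ⟨c, hc, hcs⟩ := exists_hasDerivAt_eq_slope f f' hts0 (hfc.mono hIcc2)
    (fun x hx => hDA x ⟨htstar.1.trans hx.1, hx.2.trans ht0.2⟩)
  have hc'neg : f' c < 0 := by
    rw [hcs, hroot]
    apply div_neg_of_neg_of_pos <;> linarith [hft0, hts0]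
  have hcS : c ∈ S := ⟨⟨(htstar.1.trans hc.1).le, hc.2.trans ht0.2⟩, hc'neg⟩
  have htstbar : tstar < tbar := lt_of_lt_of_le hc.1 (htbar ▸ le_csSup hSbdd hcS)
  have htbarpos : 0 < tbar := htstar.1.trans htstbar
  -- f' ≥ -1 on [0, R)
  have hge : ∀ t ∈ Ico (0:ℝ) R, -1 ≤ f' t := by
    intro t ht
    rcases eq_or_lt_of_le ht.1 with h | h
    · rw [← h, h1']
    · linarith [h2mono ⟨le_refl (0:ℝ), hR⟩ ht h, h1'.symm ▸ (le_refl (f' 0))]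
  -- f t ≥ f 0 - t on [0, R)
  have hlow : ∀ t ∈ Ico (0:ℝ) R, f 0 - t ≤ f t := by
    have hmono : MonotoneOn (fun t => f t + t) (Ico 0 R) := by
      apply monotoneOn_of_deriv_nonneg (convex_Ico 0 R)
        (hfc.add continuous_id.continuousOn)
      · intro x hx
        rw [interior_Ico] at hx
        exact ((hDA x hx).add (hasDerivAt_id x)).differentiableAt.differentiableWithinAt
      · intro x hx
        rw [interior_Ico] at hx
        rw [((hDA x hx).add (hasDerivAt_id x)).deriv]
        linarith [hge x ⟨hx.1.le, hx.2⟩]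
    intro t ht
    have := hmono ⟨le_refl (0:ℝ), hR⟩ ht ht.1
    simp only [add_zero] at this
    linarith
  -- f strictly antitone on [0, tbar)
  have hanti : StrictAntiOn f (Ico 0 tbar) := by
    apply strictAntiOn_of_deriv_neg (convex_Ico 0 tbar)
      (hfc.mono (Ico_subset_Ico_right htbarR))
    intro x hx
    rw [interior_Ico] at hx
    rw [(hDA x ⟨hx.1, lt_of_lt_of_le hx.2 htbarR⟩).deriv]
    exact hneg x ⟨hx.1.le, hx.2⟩
  have hAnt : AntitoneOn f (Ioo 0 tbar) :=
    (hanti.antitoneOn).mono Ioo_subset_Ico_self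
  have hne' : (Ioo (0:ℝ) tbar).Nonempty := ⟨tstar, htstar.1, htstbar⟩
  have hAbdd : BddBelow (f '' Ioo 0 tbar) := by
    refine ⟨f 0 - R, ?_⟩
    rintro x ⟨t, ht, rfl⟩
    have htR : t ∈ Ico (0:ℝ) R := ⟨ht.1.le, lt_of_lt_of_le ht.2 htbarR⟩
    linarith [hlow t htR, htR.2]
  have htend : Tendsto f (𝓝[<] tbar) (𝓝 (sInf (f '' Ioo 0 tbar))) :=
    hAnt.tendsto_nhdsWithin_Ioo_left hne' hAbdd
  set L := sInf (f '' Ioo 0 tbar) with hL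
  set B := (fun t => -f t) '' Ico (0:ℝ) R with hB
  have hBne : B.Nonempty := ⟨-f 0, 0, ⟨le_refl 0, hR⟩, rfl⟩
  have hBbdd : BddAbove B := by
    refine ⟨R, ?_⟩
    rintro x ⟨t, ht, rfl⟩
    have := hlow t ht
    simp only
    linarith [ht.2]
  have hβpos : 0 < β := by
    have : -f t0 ≤ β := hβ ▸ le_csSup hBbdd ⟨t0, ⟨ht0.1.le, ht0.2⟩, rfl⟩
    linarith
  -- monotone on [tbar, R)
  have hmono2 : MonotoneOn f (Ico tbar R) := by
    apply monotoneOn_of_deriv_nonneg (convex_Ico tbar R)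
      (hfc.mono (Ico_subset_Ico_left htbar0))
    · intro x hx
      rw [interior_Ico] at hx
      exact (hDA x ⟨htbarpos.trans hx.1, hx.2⟩).differentiableAt.differentiableWithinAt
    · intro x hx
      rw [interior_Ico] at hx
      rw [(hDA x ⟨htbarpos.trans hx.1, hx.2⟩).deriv]
      by_contra hcon
      push_neg at hcon
      have : x ∈ S := ⟨⟨(htbar0.trans hx.1.le), hx.2⟩, hcon⟩
      have := htbar ▸ le_csSup hSbdd this
      linarith [hx.1]
  -- L = -β
  have hLβ : L = -β := by
    have h1d : -β ≤ L := by
      apply le_csInf (hne'.image f)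
      rintro x ⟨t, ht, rfl⟩
      have : -f t ≤ β := hβ ▸ le_csSup hBbdd ⟨t, ⟨ht.1.le, lt_of_lt_of_le ht.2 htbarR⟩, rfl⟩
      linarith
    have h2d : β ≤ -L := by
      rw [hβ]
      apply csSup_le hBne
      rintro x ⟨t, ht, rfl⟩
      apply neg_le_neg
      -- goal : L ≤ f t
      rcases lt_or_ge t tbar with hlt | hle
      · rcases eq_or_lt_of_le ht.1 with h0 | h0
        · have : L ≤ f tstar := csInf_le hAbdd ⟨tstar, ⟨htstar.1, htstbar⟩, rfl⟩
          rw [hroot] at this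
          rw [← h0]; linarith
        · exact csInf_le hAbdd ⟨t, ⟨h0, hlt⟩, rfl⟩
      · -- tbar ≤ t < R; f tbar = L and f tbar ≤ f t
        have htbarR' : tbar < R := lt_of_le_of_lt hle ht.2
        have hcw : ContinuousWithinAt f (Ico 0 tbar) tbar :=
          (hfc tbar ⟨htbar0, htbarR'⟩).mono (Ico_subset_Ico_right htbarR)
        have hten2 : Tendsto f (𝓝[<] tbar) (𝓝 (f tbar)) := by
          have := hcw.tendsto
          rwa [nhdsWithin_Ico_eq_nhdsLT htbarpos] at this
        have hfeq : f tbar = L := tendsto_nhds_unique hten2 htend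
        have : f tbar ≤ f t := hmono2 ⟨le_refl tbar, htbarR'⟩ ⟨hle, ht.2⟩ hle
        linarith
    linarith
  refine ⟨hneg, htstar.1, htstbar, htbarR, ?_, hβpos, ?_⟩
  · rwa [hLβ] at htend
  · -- β < tbar : L ≥ f 0 - tbar
    have : f 0 - tbar ≤ L := by
      apply le_csInf (hne'.image f)
      rintro x ⟨t, ht, rfl⟩
      have htR : t ∈ Ico (0:ℝ) R := ⟨ht.1.le, lt_of_lt_of_le ht.2 htbarR⟩
      linarith [hlow t htR, ht.2]
    have hβle : β ≤ tbar - f 0 := by rw [← neg_neg β, ← hLβ]; linarith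
    linarith
end

section
/- Let f be a majorant function on [0,R) satisfying (h4): f(t)<0 for some t∈(0,R), with β := sup{-f(t): t∈[0,R)} and t̄ := sup{t∈[0,R): f'(t)<0}. If 0 ≤ ρ < β/2 then ρ < t̄/2 and f'(ρ) < 0. -/
open Set

/-- if `0 ≤ ρ < β/2` then `ρ < t̄/2` and `f'(ρ) < 0`. -/
theorem stmt3 (R : ℝ) (hR : 0 < R) (f f' : ℝ → ℝ)
    (hderiv : ∀ t ∈ Ico (0:ℝ) R, HasDerivWithinAt f (f' t) (Ico 0 R) t)
    (hcont : ContinuousOn f' (Ico 0 R))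
    (h1 : 0 < f 0) (h1' : f' 0 = -1)
    (h2conv : ConvexOn ℝ (Ico 0 R) f')
    (h2mono : StrictMonoOn f' (Ico 0 R))
    (h3 : ∃ t ∈ Ioo (0:ℝ) R, f t = 0)
    (h4 : ∃ t ∈ Ioo (0:ℝ) R, f t < 0)
    (tbar : ℝ) (htbar : tbar = sSup {t ∈ Ico (0:ℝ) R | f' t < 0})
    (β : ℝ) (hβ : β = sSup ((fun t => -f t) '' Ico (0:ℝ) R))
    (ρ : ℝ) (hρ0 : 0 ≤ ρ) (hρ : ρ < β / 2) :
    ρ < tbar / 2 ∧ f' ρ < 0 := by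
  set S : Set ℝ := {t ∈ Ico (0:ℝ) R | f' t < 0} with hS
  have h0S : (0:ℝ) ∈ S := ⟨⟨le_refl 0, hR⟩, by rw [h1']; norm_num⟩
  have hSne : S.Nonempty := ⟨0, h0S⟩
  have hSbdd : BddAbove S := ⟨R, fun t ht => le_of_lt ht.1.2⟩
  have htbar0 : 0 ≤ tbar := htbar ▸ le_csSup hSbdd h0S
  have htbarR : tbar ≤ R := htbar ▸ csSup_le hSne (fun t ht => le_of_lt ht.1.2)
  -- continuity of f on Ico 0 R
  have hfc : ContinuousOn f (Ico 0 R) := fun t ht => (hderiv t ht).continuousWithinAt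
  -- f' ≥ -1 on Ico 0 R
  have hfge : ∀ t ∈ Ico (0:ℝ) R, -1 ≤ f' t := by
    intro t ht
    rcases eq_or_lt_of_le ht.1 with h | h
    · rw [← h, h1']
    · rw [← h1']
      exact le_of_lt (h2mono ⟨le_refl 0, hR⟩ ht h)
  -- g = f + id is monotone on Ico 0 R
  have hg : MonotoneOn (fun t => f t + t) (Ico 0 R) := by
    apply monotoneOn_of_hasDerivWithinAt_nonneg (f' := fun t => f' t + 1)
      (convex_Ico 0 R) (hfc.add continuousOn_id)
    · intro x hx
      rw [interior_Ico] at hx ⊢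
      exact ((hderiv x (Ioo_subset_Ico_self hx)).mono Ioo_subset_Ico_self).add
        (hasDerivWithinAt_id x _)
    · intro x hx
      rw [interior_Ico] at hx
      linarith [hfge x (Ioo_subset_Ico_self hx)]
  -- f' ≥ 0 beyond tbar
  have hfpos : ∀ s ∈ Ico (0:ℝ) R, tbar < s → 0 ≤ f' s := by
    intro s hs hts
    by_contra h
    exact absurd (htbar ▸ le_csSup hSbdd ⟨hs, lt_of_not_ge h⟩) (not_le.mpr hts)
  -- -f t ≤ tbar for all t ∈ Ico 0 R
  have hkey : ∀ t ∈ Ico (0:ℝ) R, -f t ≤ tbar := by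
    intro t ht
    rcases le_or_gt t tbar with h | h
    · have := hg ⟨le_refl 0, hR⟩ ht ht.1
      simp only [add_zero] at this
      linarith
    · -- tbar < t < R, f monotone on Ico tbar R
      have htbarR' : tbar < R := lt_trans h ht.2
      have hsub : Ico tbar R ⊆ Ico (0:ℝ) R := Ico_subset_Ico htbar0 (le_refl R)
      have hmono : MonotoneOn f (Ico tbar R) := by
        apply monotoneOn_of_hasDerivWithinAt_nonneg (f' := f')
          (convex_Ico tbar R) (hfc.mono hsub)
        · intro x hx
          rw [interior_Ico] at hx ⊢
          exact (hderiv x (hsub (Ioo_subset_Ico_self hx))).mono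
            ((Ioo_subset_Ico_self).trans hsub)
        · intro x hx
          rw [interior_Ico] at hx
          exact hfpos x (hsub (Ioo_subset_Ico_self hx)) hx.1
      have h2 : f tbar ≤ f t := hmono ⟨le_refl tbar, htbarR'⟩ ⟨le_of_lt h, ht.2⟩ (le_of_lt h)
      have h3' := hg ⟨le_refl 0, hR⟩ ⟨htbar0, htbarR'⟩ htbar0
      simp only [add_zero] at h3'
      linarith
  -- β ≤ tbar
  have hβt : β ≤ tbar := by
    rw [hβ]
    apply Real.sSup_le _ htbar0
    rintro x ⟨t, ht, rfl⟩
    exact hkey t ht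
  have hρt : ρ < tbar / 2 := lt_of_lt_of_le hρ (by linarith)
  refine ⟨hρt, ?_⟩
  have hρtbar : ρ < tbar := by linarith
  obtain ⟨s, hsS, hρs⟩ := exists_lt_of_lt_csSup hSne (htbar ▸ hρtbar)
  have hρIco : ρ ∈ Ico (0:ℝ) R := ⟨hρ0, lt_of_lt_of_le (lt_of_lt_of_le hρs (le_of_lt hsS.1.2)) (le_refl R)⟩
  exact lt_trans (h2mono hρIco hsS.1 hρs) hsS.2
end

section
/- Let f be a majorant function on [0,R) with smallest root t*, and define κ := sup_{0<t<R} (-f(t))/t, λ := sup{ t ∈ [0,R) : κ + f'(t) < 0 }, and t̄ := sup{ t ∈ [0,R) : f'(t) < 0 }. Then 0 < κ < 1 and t* < λ ≤ t̄. -/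
open Set

/-- with `κ = sup_{0<t<R} (-f t)/t`, `λ = sup{t : κ + f' t < 0}` and
`t̄ = sup{t : f' t < 0}`, one has `0 < κ < 1` and `t* < λ ≤ t̄`. -/
theorem stmt4 (R : ℝ) (hR : 0 < R) (f f' : ℝ → ℝ)
    (hderiv : ∀ t ∈ Ico (0:ℝ) R, HasDerivWithinAt f (f' t) (Ico 0 R) t)
    (hcont : ContinuousOn f' (Ico 0 R))
    (h1 : 0 < f 0) (h1' : f' 0 = -1)
    (h2conv : ConvexOn ℝ (Ico 0 R) f')
    (h2mono : StrictMonoOn f' (Ico 0 R))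
    (tstar : ℝ) (htstar : tstar ∈ Ioo (0:ℝ) R) (hroot : f tstar = 0)
    (hmin : ∀ t ∈ Ioo (0:ℝ) R, f t = 0 → tstar ≤ t)
    (h4 : ∃ t ∈ Ioo (0:ℝ) R, f t < 0)
    (κ lam tbar : ℝ)
    (hκ : κ = sSup ((fun t => -f t / t) '' Ioo (0:ℝ) R))
    (hlam : lam = sSup {t ∈ Ico (0:ℝ) R | κ + f' t < 0})
    (htbar : tbar = sSup {t ∈ Ico (0:ℝ) R | f' t < 0}) :
    0 < κ ∧ κ < 1 ∧ tstar < lam ∧ lam ≤ tbar := by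
  obtain ⟨hts0, htsR⟩ := htstar
  have hfc : ContinuousOn f (Ico 0 R) := fun t ht => (hderiv t ht).continuousWithinAt
  -- f t ≥ f 0 - t on Ico 0 R
  have hA : ∀ t ∈ Ico (0:ℝ) R, f 0 - t ≤ f t := by
    have hmono : MonotoneOn (fun t => f t + t) (Ico 0 R) := by
      apply monotoneOn_of_hasDerivWithinAt_nonneg (convex_Ico 0 R)
        (f' := fun t => f' t + 1) (hfc.add continuousOn_id)
      · intro x hx
        rw [interior_Ico] at hx ⊢
        exact ((hderiv x (Ioo_subset_Ico_self hx)).mono Ioo_subset_Ico_self).add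
          (hasDerivWithinAt_id x _)
      · intro x hx
        rw [interior_Ico] at hx
        have := h2mono (left_mem_Ico.2 hR) (Ioo_subset_Ico_self hx) hx.1
        rw [h1'] at this
        linarith
    intro t ht
    have := hmono (left_mem_Ico.2 hR) ht ht.1
    simp only [add_zero] at this
    linarith
  -- f t ≥ f' tstar * (t - tstar) on [tstar, R)
  have hB : ∀ t ∈ Ico tstar R, f' tstar * (t - tstar) ≤ f t := by
    have hsub : Ico tstar R ⊆ Ico 0 R := Ico_subset_Ico (le_of_lt hts0) le_rfl
    have hmono : MonotoneOn (fun t => f t - f' tstar * t) (Ico tstar R) := by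
      apply monotoneOn_of_hasDerivWithinAt_nonneg (convex_Ico tstar R)
        (f' := fun t => f' t - f' tstar) ((hfc.mono hsub).sub (Continuous.continuousOn (by continuity)))
      · intro x hx
        rw [interior_Ico] at hx ⊢
        have h1 := (hderiv x (hsub (Ioo_subset_Ico_self hx))).mono
          ((Ioo_subset_Ico_self).trans hsub)
        have h2 : HasDerivWithinAt (fun y => f' tstar * y) (f' tstar) (Ioo tstar R) x := by
          simpa using (hasDerivWithinAt_id x (Ioo tstar R)).const_mul (f' tstar)
        exact h1.sub h2
      · intro x hx
        rw [interior_Ico] at hx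
        have := h2mono (hsub (left_mem_Ico.2 (lt_trans hx.1 hx.2)))
          (hsub (Ioo_subset_Ico_self hx)) hx.1
        linarith
    intro t ht
    have := hmono (left_mem_Ico.2 (lt_of_lt_of_le htsR le_rfl)) ht ht.1
    simp only [hroot] at this
    nlinarith
  -- f is nonnegative on (0, tstar]
  have hpos : ∀ t ∈ Ioo (0:ℝ) R, t ≤ tstar → 0 ≤ f t := by
    intro t ht hle
    by_contra hneg
    push_neg at hneg
    have htlt : t < tstar := lt_of_le_of_ne hle (by
      intro h; rw [h, hroot] at hneg; linarith)
    have hIcc : Icc (0:ℝ) t ⊆ Ico 0 R := fun x hx => ⟨hx.1, lt_of_le_of_lt hx.2 ht.2⟩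
    have h0 : (0:ℝ) ∈ Ioo (f t) (f 0) := ⟨hneg, h1⟩
    obtain ⟨r, hr, hfr⟩ := intermediate_value_Ioo' (le_of_lt ht.1) (hfc.mono hIcc) h0
    have := hmin r ⟨hr.1, lt_trans hr.2 ht.2⟩ hfr
    linarith [hr.2]
  -- the witness of h4 lies above tstar
  obtain ⟨t₀, ht₀, hft₀⟩ := h4
  have ht₀gt : tstar < t₀ := by
    by_contra hcon
    push_neg at hcon
    linarith [hpos t₀ ht₀ hcon]
  -- f' tstar < 0
  have hfpts : f' tstar < 0 := by
    have := hB t₀ ⟨le_of_lt ht₀gt, ht₀.2⟩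
    nlinarith
  set A := -f' tstar with hAdef
  have hApos : 0 < A := by simp [hAdef]; linarith
  set c := tstar / R with hcdef
  have hcpos : 0 < c := div_pos hts0 hR
  have hclt : c < 1 := (div_lt_one hR).2 htsR
  have hcR : c * R = tstar := div_mul_cancel₀ tstar (ne_of_gt hR)
  -- bound each element of the sup set by A * (1 - c)
  have hbound : ∀ y ∈ (fun t => -f t / t) '' Ioo (0:ℝ) R, y ≤ A * (1 - c) := by
    rintro y ⟨t, ht, rfl⟩
    rcases le_or_gt t tstar with hle | hgt
    · have h0 : 0 ≤ f t := hpos t ht hle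
      have : -f t / t ≤ 0 := div_nonpos_of_nonpos_of_nonneg (by linarith) (le_of_lt ht.1)
      nlinarith
    · have hBt := hB t ⟨le_of_lt hgt, ht.2⟩
      rw [div_le_iff₀ ht.1]
      nlinarith [mul_pos hApos (mul_pos hcpos (sub_pos.2 ht.2))]
  have hbdd : BddAbove ((fun t => -f t / t) '' Ioo (0:ℝ) R) := ⟨A * (1 - c), hbound⟩
  have hne : ((fun t => -f t / t) '' Ioo (0:ℝ) R).Nonempty :=
    ⟨-f t₀ / t₀, t₀, ht₀, rfl⟩
  -- κ > 0
  have hκpos : 0 < κ := by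
    have hle := hκ ▸ le_csSup hbdd ⟨t₀, ht₀, rfl⟩
    have : 0 < -f t₀ / t₀ := div_pos (by linarith) ht₀.1
    linarith
  -- κ ≤ A * (1 - c)
  have hκle : κ ≤ A * (1 - c) := hκ ▸ csSup_le hne hbound
  -- κ < 1
  have hκlt : κ < 1 := by
    have hb1 : ∀ y ∈ (fun t => -f t / t) '' Ioo (0:ℝ) R, y ≤ 1 - f 0 / R := by
      rintro y ⟨t, ht, rfl⟩
      have hAt := hA t ⟨le_of_lt ht.1, ht.2⟩
      rw [div_le_iff₀ ht.1]
      have hd : f 0 / R * R = f 0 := div_mul_cancel₀ (f 0) (ne_of_gt hR)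
      nlinarith [mul_pos (div_pos h1 hR) (sub_pos.2 ht.2)]
    have := hκ ▸ csSup_le hne hb1
    have : κ ≤ 1 - f 0 / R := this
    have hfr : 0 < f 0 / R := div_pos h1 hR
    linarith
  -- κ + f' tstar < 0
  have hkey : κ + f' tstar < 0 := by nlinarith
  -- find ttil > tstar with κ + f' ttil < 0
  have hc' : ContinuousWithinAt f' (Ico 0 R) tstar := hcont tstar ⟨le_of_lt hts0, htsR⟩
  have hM : f' ⁻¹' Iio (-κ) ∈ nhdsWithin tstar (Ico 0 R) :=
    hc' (Iio_mem_nhds (by linarith))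
  obtain ⟨U, hUo, htU, hUsub⟩ := mem_nhdsWithin.1 hM
  obtain ⟨ε, hε, hball⟩ := Metric.isOpen_iff.1 hUo tstar htU
  set ttil := tstar + min ε (R - tstar) / 2 with httildef
  have hmin2 : 0 < min ε (R - tstar) := lt_min hε (by linarith)
  have httilgt : tstar < ttil := by simp only [httildef]; linarith
  have httilR : ttil < R := by
    have : min ε (R - tstar) ≤ R - tstar := min_le_right _ _
    simp only [httildef]; linarith
  have httilU : ttil ∈ U := by
    apply hball
    rw [Metric.mem_ball, Real.dist_eq]
    have : min ε (R - tstar) ≤ ε := min_le_left _ _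
    rw [abs_of_pos (by simp only [httildef]; linarith : (0:ℝ) < ttil - tstar)]
    simp only [httildef]; linarith
  have httilIco : ttil ∈ Ico (0:ℝ) R := ⟨by linarith, httilR⟩
  have httilS : ttil ∈ {t ∈ Ico (0:ℝ) R | κ + f' t < 0} := by
    refine ⟨httilIco, ?_⟩
    have := hUsub ⟨httilU, httilIco⟩
    simp only [mem_preimage, mem_Iio] at this
    linarith
  have hSbdd : BddAbove {t ∈ Ico (0:ℝ) R | κ + f' t < 0} :=
    ⟨R, fun x hx => le_of_lt hx.1.2⟩
  have hTbdd : BddAbove {t ∈ Ico (0:ℝ) R | f' t < 0} :=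
    ⟨R, fun x hx => le_of_lt hx.1.2⟩
  have hlamgt : tstar < lam := by
    have := le_csSup hSbdd httilS
    rw [hlam]
    linarith
  have hlamle : lam ≤ tbar := by
    rw [hlam, htbar]
    apply csSup_le_csSup hTbdd ⟨ttil, httilS⟩
    rintro x ⟨hx1, hx2⟩
    exact ⟨hx1, by linarith⟩
  exact ⟨hκpos, hκlt, hlamgt, hlamle⟩
end

section
/- Let f be a majorant function on [0,R) with κ := sup_{0<t<R} (-f(t))/t ∈ (0,1) and λ := sup{t∈[0,R): κ+f'(t)<0}. Then f'(t) + κ < 0 for all t ∈ [0,λ), and inf_{0≤t<R} ( f(t) + κ t ) = lim_{t→λ⁻} ( f(t) + κ t ) = 0. -/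
open Set Filter Topology

/-- `f' t + κ < 0` on `[0,λ)` and
`inf_{0≤t<R} (f t + κ t) = lim_{t→λ⁻} (f t + κ t) = 0`. -/
theorem stmt5 (R : ℝ) (hR : 0 < R) (f f' : ℝ → ℝ)
    (hderiv : ∀ t ∈ Ico (0:ℝ) R, HasDerivWithinAt f (f' t) (Ico 0 R) t)
    (hcont : ContinuousOn f' (Ico 0 R))
    (h1 : 0 < f 0) (h1' : f' 0 = -1)
    (h2conv : ConvexOn ℝ (Ico 0 R) f')
    (h2mono : StrictMonoOn f' (Ico 0 R))
    (h3 : ∃ t ∈ Ioo (0:ℝ) R, f t = 0)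
    (h4 : ∃ t ∈ Ioo (0:ℝ) R, f t < 0)
    (κ lam : ℝ)
    (hκ : κ = sSup ((fun t => -f t / t) '' Ioo (0:ℝ) R))
    (hκ01 : 0 < κ ∧ κ < 1)
    (hlam : lam = sSup {t ∈ Ico (0:ℝ) R | κ + f' t < 0}) :
    (∀ t ∈ Ico (0:ℝ) lam, f' t + κ < 0) ∧
      sInf ((fun t => f t + κ * t) '' Ico (0:ℝ) R) = 0 ∧
      Tendsto (fun t => f t + κ * t) (𝓝[<] lam) (𝓝 0) := by
  obtain ⟨hκ0, hκ1⟩ := hκ01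
  set g : ℝ → ℝ := fun t => f t + κ * t with hg
  set T : Set ℝ := (fun t => -f t / t) '' Ioo (0:ℝ) R with hT
  set S : Set ℝ := {t ∈ Ico (0:ℝ) R | κ + f' t < 0} with hSdef
  -- basic facts about T
  have hTne : T.Nonempty := by
    obtain ⟨t, ht, _⟩ := h4
    exact ⟨-f t / t, t, ht, rfl⟩
  have hTbdd : BddAbove T := by
    by_contra h
    rw [hκ, Real.sSup_of_not_bddAbove h] at hκ0
    exact lt_irrefl _ hκ0
  have hub : ∀ t ∈ Ioo (0:ℝ) R, -f t / t ≤ κ := by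
    intro t ht
    rw [hκ]
    exact le_csSup hTbdd ⟨t, ht, rfl⟩
  have hg0 : ∀ t ∈ Ico (0:ℝ) R, 0 ≤ g t := by
    intro t ht
    rcases eq_or_lt_of_le ht.1 with h | h
    · simp [hg, ← h]; linarith
    · have := hub t ⟨h, ht.2⟩
      rw [div_le_iff₀ h] at this
      simp only [hg]
      nlinarith
  -- basic facts about S
  have h0S : (0:ℝ) ∈ S := ⟨⟨le_refl 0, hR⟩, by rw [h1']; linarith⟩
  have hSne : S.Nonempty := ⟨0, h0S⟩
  have hSbdd : BddAbove S := ⟨R, fun x hx => hx.1.2.le⟩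
  have hlamR : lam ≤ R := by
    rw [hlam]; exact csSup_le hSne fun x hx => hx.1.2.le
  have hlam0 : 0 ≤ lam := by
    rw [hlam]; exact le_csSup hSbdd h0S
  -- lam > 0
  have hlampos : 0 < lam := by
    have hc0 : Tendsto f' (𝓝[Ico (0:ℝ) R] 0) (𝓝 (f' 0)) := hcont 0 ⟨le_refl 0, hR⟩
    have hev : ∀ᶠ t in 𝓝[Ico (0:ℝ) R] 0, f' t < -κ :=
      hc0 (Iio_mem_nhds (show f' 0 < -κ by rw [h1']; linarith))
    have hle : 𝓝[>] (0:ℝ) ≤ 𝓝[Ico (0:ℝ) R] 0 := by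
      rw [← nhdsWithin_Ioo_eq_nhdsGT hR]
      exact nhdsWithin_mono _ Ioo_subset_Ico_self
    have hev2 : ∀ᶠ t in 𝓝[>] (0:ℝ), f' t < -κ := hle hev
    have hev3 : ∀ᶠ t in 𝓝[>] (0:ℝ), t ∈ Ioo (0:ℝ) R := by
      rw [← nhdsWithin_Ioo_eq_nhdsGT hR]
      exact self_mem_nhdsWithin
    obtain ⟨s, hs1, hs2⟩ := (hev2.and hev3).exists
    have : s ∈ S := ⟨⟨hs2.1.le, hs2.2⟩, by linarith⟩
    calc (0:ℝ) < s := hs2.1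
    _ ≤ lam := by rw [hlam]; exact le_csSup hSbdd this
  -- part 1
  have part1 : ∀ t ∈ Ico (0:ℝ) lam, f' t + κ < 0 := by
    intro t ht
    obtain ⟨s, hsS, hts⟩ := exists_lt_of_lt_csSup hSne (hlam ▸ ht.2)
    have hmono := h2mono ⟨ht.1, lt_trans hts hsS.1.2⟩ hsS.1 hts
    linarith [hsS.2]
  -- MVT for g
  have mvt : ∀ x y : ℝ, 0 ≤ x → x < y → y < R →
      ∃ c ∈ Ioo x y, g y - g x = (f' c + κ) * (y - x) := by
    intro x y hx hxy hyR
    have hsub : Icc x y ⊆ Ico 0 R := fun z hz => ⟨hx.trans hz.1, lt_of_le_of_lt hz.2 hyR⟩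
    have hcg : ContinuousOn g (Icc x y) := by
      intro z hz
      exact (((hderiv z (hsub hz)).add
        ((hasDerivWithinAt_id z _).const_mul κ)).continuousWithinAt).mono hsub
    have hdg : ∀ z ∈ Ioo x y, HasDerivAt g (f' z + κ) z := by
      intro z hz
      have hz' : z ∈ Ico (0:ℝ) R := hsub ⟨hz.1.le, hz.2.le⟩
      have hmem : Ico (0:ℝ) R ∈ 𝓝 z := by
        apply mem_of_superset (Ioo_mem_nhds (lt_of_le_of_lt hx hz.1) (hz.2.trans hyR))
        exact Ioo_subset_Ico_self
      have := ((hderiv z hz').add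
        ((hasDerivWithinAt_id z _).const_mul κ)).hasDerivAt hmem
      exact this.congr_deriv (by ring)
    obtain ⟨c, hc, hc2⟩ := exists_hasDerivAt_eq_slope g (fun z => f' z + κ) hxy hcg hdg
    refine ⟨c, hc, ?_⟩
    rw [hc2, div_mul_eq_mul_div, mul_div_assoc, div_self (sub_ne_zero.2 hxy.ne'), mul_one]
  -- g antitone on Ico 0 lam
  have hanti : AntitoneOn g (Ico (0:ℝ) lam) := by
    intro x hx y hy hxy
    rcases eq_or_lt_of_le hxy with h | h
    · rw [h]
    · obtain ⟨c, hc, heq⟩ := mvt x y hx.1 h (lt_of_lt_of_le hy.2 hlamR)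
      have hcm : c ∈ Ico (0:ℝ) lam := ⟨hx.1.trans hc.1.le, hc.2.trans hy.2⟩
      nlinarith [part1 c hcm]
  -- sInf = 0
  have hIne : (g '' Ico (0:ℝ) R).Nonempty := ⟨g 0, 0, ⟨le_refl 0, hR⟩, rfl⟩
  have hIbdd : BddBelow (g '' Ico (0:ℝ) R) := by
    refine ⟨0, ?_⟩
    rintro x ⟨t, ht, rfl⟩
    exact hg0 t ht
  have hinf_ge : 0 ≤ sInf (g '' Ico (0:ℝ) R) := by
    apply le_csInf hIne
    rintro x ⟨t, ht, rfl⟩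
    exact hg0 t ht
  have hinf : sInf (g '' Ico (0:ℝ) R) = 0 := by
    refine le_antisymm ?_ hinf_ge
    by_contra h
    push_neg at h
    set ε := sInf (g '' Ico (0:ℝ) R) with hε
    have hεR : 0 < ε / R := div_pos h hR
    have : κ - ε / R < sSup T := by rw [← hκ]; linarith
    obtain ⟨x, ⟨s, hs, rfl⟩, hx⟩ := exists_lt_of_lt_csSup hTne this
    have hs0 : 0 < s := hs.1
    rw [lt_div_iff₀ hs0] at hx
    have hgs : g s < ε := by
      have h1 : (κ - ε / R) * s < -f s := hx
      have h2 : ε / R * s < ε / R * R := by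
        apply mul_lt_mul_of_pos_left hs.2 hεR
      have h3 : ε / R * R = ε := by field_simp
      simp only [hg]
      nlinarith
    have := csInf_le hIbdd ⟨s, ⟨hs0.le, hs.2⟩, rfl⟩
    linarith
  -- the limit L
  have hIoo_sub : Ioo (0:ℝ) lam ⊆ Ico (0:ℝ) R :=
    fun z hz => ⟨hz.1.le, lt_of_lt_of_le hz.2 hlamR⟩
  have hIoo_sub' : Ioo (0:ℝ) lam ⊆ Ico (0:ℝ) lam := Ioo_subset_Ico_self
  have hLbdd : BddBelow (g '' Ioo (0:ℝ) lam) := by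
    refine ⟨0, ?_⟩
    rintro x ⟨t, ht, rfl⟩
    exact hg0 t (hIoo_sub ht)
  have hLne : (Ioo (0:ℝ) lam).Nonempty := nonempty_Ioo.2 hlampos
  have hL : Tendsto g (𝓝[<] lam) (𝓝 (sInf (g '' Ioo (0:ℝ) lam))) :=
    AntitoneOn.tendsto_nhdsWithin_Ioo_left hLne (hanti.mono hIoo_sub') hLbdd
  set L := sInf (g '' Ioo (0:ℝ) lam) with hLdef
  have hLne' : (g '' Ioo (0:ℝ) lam).Nonempty := hLne.image g
  have hLge : 0 ≤ L := by
    apply le_csInf hLne'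
    rintro x ⟨t, ht, rfl⟩
    exact hg0 t (hIoo_sub ht)
  -- L is a lower bound of g '' Ico 0 R
  have hLlb : ∀ t ∈ Ico (0:ℝ) R, L ≤ g t := by
    intro t ht
    rcases lt_or_ge t lam with h | h
    · -- pick s ∈ (t, lam)
      set s := (t + lam) / 2 with hs
      have hts : t < s := by simp [hs]; linarith
      have hslam : s < lam := by simp [hs]; linarith
      have hs0 : 0 < s := lt_of_le_of_lt ht.1 hts
      have h1 : g s ≤ g t := hanti ⟨ht.1, h⟩ ⟨hs0.le, hslam⟩ hts.le
      have h2 : L ≤ g s := csInf_le hLbdd ⟨s, ⟨hs0, hslam⟩, rfl⟩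
      linarith
    · -- lam ≤ t < R, so lam ∈ Ico 0 R
      have hlamlt : lam < R := lt_of_le_of_lt h ht.2
      have hglam : g lam = L := by
        have hcw : ContinuousWithinAt g (Ico (0:ℝ) R) lam :=
          ((hderiv lam ⟨hlam0, hlamlt⟩).add
            ((hasDerivWithinAt_id lam _).const_mul κ)).continuousWithinAt
        have hle : 𝓝[<] lam ≤ 𝓝[Ico (0:ℝ) R] lam := by
          rw [← nhdsWithin_Ico_eq_nhdsLT hlampos]
          apply nhdsWithin_mono
          exact fun z hz => ⟨hz.1, lt_of_lt_of_le hz.2 hlamR⟩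
        exact tendsto_nhds_unique (hcw.mono_left hle) hL
      have : g lam ≤ g t := by
        rcases eq_or_lt_of_le h with h' | h'
        · rw [h']
        · obtain ⟨c, hc, heq⟩ := mvt lam t hlam0 h' ht.2
          have hcS : c ∉ S := by
            intro hcS
            have : c ≤ lam := by rw [hlam]; exact le_csSup hSbdd hcS
            linarith [hc.1]
          have hcm : c ∈ Ico (0:ℝ) R := ⟨hlam0.trans hc.1.le, hc.2.trans ht.2⟩
          have : ¬ (κ + f' c < 0) := fun hx => hcS ⟨hcm, hx⟩
          push_neg at this
          nlinarith [hc.1, hc.2]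
      linarith [hglam ▸ this]
  have hLle : L ≤ 0 := by
    rw [← hinf]
    apply le_csInf hIne
    rintro x ⟨t, ht, rfl⟩
    exact hLlb t ht
  have hL0 : L = 0 := le_antisymm hLle hLge
  exact ⟨part1, hinf, hL0 ▸ hL⟩
end

section
/- Let f be a majorant function on [0,R) with κ := sup_{0<t<R}(-f(t))/t, λ := sup{t∈[0,λ): κ+f'(t)<0}, and θ̃ := κ/(2-κ). Fix 0 ≤ θ ≤ θ̃ and define the set A := { (t,ε) ∈ ℝ² : 0 ≤ t < λ, 0 ≤ ε ≤ κt, 0 < f(t)+ε }. If (t,ε) ∈ A and t₊ := t - (1+θ)(f(t)+ε)/f'(t), ε₊ := ε + 2θ(f(t)+ε), then (t₊, ε₊) ∈ A, t < t₊, and ε ≤ ε₊. -/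
set_option maxHeartbeats 1000000


open Set

lemma tangent_lt (R : ℝ) (f f' : ℝ → ℝ)
    (hderiv : ∀ t ∈ Ico (0:ℝ) R, HasDerivWithinAt f (f' t) (Ico 0 R) t)
    (h2mono : StrictMonoOn f' (Ico 0 R))
    {x y : ℝ} (hx : x ∈ Ico (0:ℝ) R) (hy : y ∈ Ico (0:ℝ) R) (hxy : x ≠ y) :
    f x + f' x * (y - x) < f y := by
  have hc : ContinuousOn f (Ico (0:ℝ) R) := fun z hz =>
    (hderiv z hz).continuousWithinAt
  have key : ∀ a b : ℝ, a ∈ Ico (0:ℝ) R → b ∈ Ico (0:ℝ) R → a < b →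
      ∃ c ∈ Ioo a b, f' c = (f b - f a) / (b - a) := by
    intro a b ha hb hab
    apply exists_hasDerivAt_eq_slope f f' hab
    · exact hc.mono (fun z hz => ⟨le_trans ha.1 hz.1, lt_of_le_of_lt hz.2 hb.2⟩)
    · intro z hz
      have hz' : z ∈ Ico (0:ℝ) R := ⟨le_trans ha.1 hz.1.le, lt_trans hz.2 hb.2⟩
      exact (hderiv z hz').hasDerivAt (Ico_mem_nhds (lt_of_le_of_lt ha.1 hz.1) (lt_trans hz.2 hb.2))
  rcases lt_or_gt_of_ne hxy with h | h
  · obtain ⟨c, hc1, hc2⟩ := key x y hx hy h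
    have hcI : c ∈ Ico (0:ℝ) R := ⟨le_trans hx.1 hc1.1.le, lt_trans hc1.2 hy.2⟩
    have : f' x < f' c := h2mono hx hcI hc1.1
    rw [hc2] at this
    have hyx : 0 < y - x := by linarith
    rw [lt_div_iff₀ hyx] at this
    linarith
  · obtain ⟨c, hc1, hc2⟩ := key y x hy hx h
    have hcI : c ∈ Ico (0:ℝ) R := ⟨le_trans hy.1 hc1.1.le, lt_trans hc1.2 hx.2⟩
    have : f' c < f' x := h2mono hcI hx hc1.2
    rw [hc2] at this
    have hxy' : 0 < x - y := by linarith
    rw [div_lt_iff₀ hxy'] at this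
    nlinarith

lemma tangent_le (R : ℝ) (f f' : ℝ → ℝ)
    (hderiv : ∀ t ∈ Ico (0:ℝ) R, HasDerivWithinAt f (f' t) (Ico 0 R) t)
    (h2mono : StrictMonoOn f' (Ico 0 R))
    {x y : ℝ} (hx : x ∈ Ico (0:ℝ) R) (hy : y ∈ Ico (0:ℝ) R) :
    f x + f' x * (y - x) ≤ f y := by
  rcases eq_or_ne x y with rfl | h
  · simp
  · exact (tangent_lt R f f' hderiv h2mono hx hy h).le

lemma mvt_slope (R : ℝ) (f f' : ℝ → ℝ)
    (hderiv : ∀ t ∈ Ico (0:ℝ) R, HasDerivWithinAt f (f' t) (Ico 0 R) t)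
    {a b : ℝ} (ha : a ∈ Ico (0:ℝ) R) (hb : b ∈ Ico (0:ℝ) R) (hab : a < b) :
    ∃ c ∈ Ioo a b, f' c = (f b - f a) / (b - a) := by
  have hc : ContinuousOn f (Ico (0:ℝ) R) := fun z hz =>
    (hderiv z hz).continuousWithinAt
  apply exists_hasDerivAt_eq_slope f f' hab
  · exact hc.mono (fun z hz => ⟨le_trans ha.1 hz.1, lt_of_le_of_lt hz.2 hb.2⟩)
  · intro z hz
    have hz' : z ∈ Ico (0:ℝ) R := ⟨le_trans ha.1 hz.1.le, lt_trans hz.2 hb.2⟩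
    exact (hderiv z hz').hasDerivAt (Ico_mem_nhds (lt_of_le_of_lt ha.1 hz.1) (lt_trans hz.2 hb.2))

/-- the inexact Newton iteration on the majorant function maps the set
`A` into itself, with `t < t₊` and `ε ≤ ε₊`. -/
theorem stmt6 (R : ℝ) (hR : 0 < R) (f f' : ℝ → ℝ)
    (hderiv : ∀ t ∈ Ico (0:ℝ) R, HasDerivWithinAt f (f' t) (Ico 0 R) t)
    (hcont : ContinuousOn f' (Ico 0 R))
    (h1 : 0 < f 0) (h1' : f' 0 = -1)
    (h2conv : ConvexOn ℝ (Ico 0 R) f')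
    (h2mono : StrictMonoOn f' (Ico 0 R))
    (h3 : ∃ t ∈ Ioo (0:ℝ) R, f t = 0)
    (h4 : ∃ t ∈ Ioo (0:ℝ) R, f t < 0)
    (κ lam θ : ℝ)
    (hκ : κ = sSup ((fun t => -f t / t) '' Ioo (0:ℝ) R))
    (hlam : lam = sSup {t ∈ Ico (0:ℝ) R | κ + f' t < 0})
    (hθ0 : 0 ≤ θ) (hθ : θ ≤ κ / (2 - κ))
    (A : Set (ℝ × ℝ))
    (hA : A = {p : ℝ × ℝ | 0 ≤ p.1 ∧ p.1 < lam ∧ 0 ≤ p.2 ∧ p.2 ≤ κ * p.1 ∧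
      0 < f p.1 + p.2})
    (t ε : ℝ) (ht : (t, ε) ∈ A) :
    (t - (1 + θ) * (f t + ε) / f' t, ε + 2 * θ * (f t + ε)) ∈ A ∧
      t < t - (1 + θ) * (f t + ε) / f' t ∧
      ε ≤ ε + 2 * θ * (f t + ε) := by
  subst hA
  obtain ⟨ht0, htlam, hε0, hεκ, hpos⟩ := ht
  simp only [Set.mem_setOf_eq] at ht0 htlam hε0 hεκ hpos ⊢
  set I : Set ℝ := (fun t => -f t / t) '' Ioo (0:ℝ) R with hI
  obtain ⟨t0, ht0I, ht0neg⟩ := h4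
  have h0Ico : (0:ℝ) ∈ Ico (0:ℝ) R := ⟨le_refl 0, hR⟩
  have hIne : I.Nonempty := ⟨_, mem_image_of_mem _ ht0I⟩
  -- every element of I is at most 1 - f 0 / R
  have hIbound : ∀ x ∈ I, x ≤ 1 - f 0 / R := by
    rintro x ⟨s, hs, rfl⟩
    have hsIco : s ∈ Ico (0:ℝ) R := ⟨hs.1.le, hs.2⟩
    have htang := tangent_le R f f' hderiv h2mono h0Ico hsIco
    rw [h1'] at htang
    have hs0 : 0 < s := hs.1
    rw [div_le_iff₀ hs0]
    have hfR : f 0 / R * s ≤ f 0 := by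
      rw [div_mul_eq_mul_div, div_le_iff₀ hR]
      nlinarith [hs.2, h1]
    nlinarith
  have hIbdd : BddAbove I := ⟨1 - f 0 / R, hIbound⟩
  have hκ1 : κ < 1 := by
    have h2 := csSup_le hIne hIbound
    have h3 : f 0 / R > 0 := div_pos h1 hR
    rw [hκ]; linarith
  have hκpos : 0 < κ := by
    have hel : -f t0 / t0 ∈ I := mem_image_of_mem _ ht0I
    have h1 := le_csSup hIbdd hel
    have : 0 < -f t0 / t0 := div_pos (by linarith) ht0I.1
    rw [hκ]; linarith
  -- f s + κ * s ≥ 0 on Ico 0 R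
  have hh0 : ∀ s ∈ Ico (0:ℝ) R, 0 ≤ f s + κ * s := by
    intro s hs
    rcases eq_or_lt_of_le hs.1 with rfl | hs0
    · simpa using h1.le
    · have hel : -f s / s ∈ I := mem_image_of_mem _ ⟨hs0, hs.2⟩
      have := le_csSup hIbdd hel
      rw [← hκ] at this
      rw [div_le_iff₀ hs0] at this
      nlinarith
  set S : Set ℝ := {t ∈ Ico (0:ℝ) R | κ + f' t < 0} with hS
  have h0S : (0:ℝ) ∈ S := ⟨h0Ico, by rw [h1']; linarith⟩
  have hSne : S.Nonempty := ⟨0, h0S⟩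
  have hSbdd : BddAbove S := ⟨R, fun x hx => hx.1.2.le⟩
  have hlamR : lam ≤ R := by rw [hlam]; exact csSup_le hSne (fun x hx => hx.1.2.le)
  have htR : t < R := lt_of_lt_of_le htlam hlamR
  have htI : t ∈ Ico (0:ℝ) R := ⟨ht0, htR⟩
  -- f' c < -κ for 0 ≤ c < lam
  have hflt : ∀ c : ℝ, 0 ≤ c → c < lam → f' c < -κ := by
    intro c hc0 hclam
    rw [hlam] at hclam
    obtain ⟨s, hsS, hcs⟩ := exists_lt_of_lt_csSup hSne hclam
    have hcI : c ∈ Ico (0:ℝ) R := ⟨hc0, lt_trans hcs hsS.1.2⟩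
    have := h2mono hcI hsS.1 hcs
    have := hsS.2
    linarith
  have hft' : f' t < -κ := hflt t ht0 htlam
  have hft'neg : f' t < 0 := by linarith
  have hft'ne : f' t ≠ 0 := ne_of_lt hft'neg
  have hft'ge : -1 ≤ f' t := by
    rcases eq_or_lt_of_le ht0 with rfl | h
    · rw [h1']
    · have := h2mono h0Ico htI h
      rw [h1'] at this; linarith
  -- -κ ≤ f' c for lam < c < R
  have hfge : ∀ c : ℝ, lam < c → c ∈ Ico (0:ℝ) R → -κ ≤ f' c := by
    intro c hlamc hcI
    by_contra hcon
    push_neg at hcon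
    have hcS : c ∈ S := ⟨hcI, by linarith⟩
    have := le_csSup hSbdd hcS
    rw [← hlam] at this
    linarith
  set d := f t + ε with hd
  have hdpos : 0 < d := hpos
  set D := -f' t with hD
  have hDκ : κ < D := by rw [hD]; linarith
  have hDpos : 0 < D := by linarith
  have hD1 : D ≤ 1 := by rw [hD]; linarith
  clear_value d D
  have hθ2κ : θ * (2 - κ) ≤ κ := by
    rw [le_div_iff₀ (by linarith : (0:ℝ) < 2 - κ)] at hθ
    exact hθ
  -- the step rewrite
  have hstep : t - (1 + θ) * d / f' t = t + (1 + θ) * d / D := by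
    rw [hD, div_neg, ← sub_eq_add_neg]
  have hstep_pos : 0 < (1 + θ) * d / D :=
    div_pos (mul_pos (by linarith) hdpos) hDpos
  -- KEY: f t + f' t * (lam - t) + κ * lam ≤ 0
  have hkey : f t + f' t * (lam - t) + κ * lam ≤ 0 := by
    rcases lt_or_eq_of_le hlamR with hlamlt | rfl
    · -- lam < R
      have hlam0 : 0 ≤ lam := by linarith
      have hlamI : lam ∈ Ico (0:ℝ) R := ⟨hlam0, hlamlt⟩
      have htang := tangent_le R f f' hderiv h2mono htI hlamI
      -- suffices h(lam) ≤ 0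
      have hhlam : f lam + κ * lam ≤ 0 := by
        by_contra hcon
        push_neg at hcon
        set m := f lam + κ * lam with hm
        -- h(s) ≥ m for all s ∈ Ioo 0 R
        have hmin : ∀ s ∈ Ioo (0:ℝ) R, m ≤ f s + κ * s := by
          intro s hs
          have hsI : s ∈ Ico (0:ℝ) R := ⟨hs.1.le, hs.2⟩
          rcases lt_trichotomy s lam with h | h | h
          · obtain ⟨c, hc1, hc2⟩ := mvt_slope R f f' hderiv hsI hlamI h
            have hcκ : f' c < -κ := hflt c (le_trans hs.1.le hc1.1.le) hc1.2
            rw [hc2] at hcκ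
            rw [div_lt_iff₀ (by linarith : (0:ℝ) < lam - s)] at hcκ
            nlinarith
          · rw [h]
          · obtain ⟨c, hc1, hc2⟩ := mvt_slope R f f' hderiv hlamI hsI h
            have hcI : c ∈ Ico (0:ℝ) R := ⟨le_trans hlam0 hc1.1.le, lt_trans hc1.2 hs.2⟩
            have hcκ : -κ ≤ f' c := hfge c hc1.1 hcI
            rw [hc2] at hcκ
            rw [le_div_iff₀ (by linarith : (0:ℝ) < s - lam)] at hcκ
            nlinarith
        -- contradiction with sup
        have : ∀ x ∈ I, x ≤ κ - m / R := by
          rintro x ⟨s, hs, rfl⟩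
          have := hmin s hs
          have hs0 : 0 < s := hs.1
          rw [div_le_iff₀ hs0]
          have : m / R * s ≤ m := by
            rw [div_mul_eq_mul_div, div_le_iff₀ hR]
            nlinarith [hs.2]
          nlinarith
        have hsup := csSup_le hIne this
        rw [← hκ] at hsup
        have hmR : 0 < m / R := div_pos hcon hR
        linarith
      linarith
    · -- lam = R
      by_contra hcon
      push_neg at hcon
      set X := f t + f' t * (lam - t) + κ * lam with hX
      have hXR : 0 < X / (2 * lam) := div_pos hcon (by linarith)
      have : κ - X / (2 * lam) < sSup I := by rw [← hκ]; linarith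
      obtain ⟨x, hxI, hx⟩ := exists_lt_of_lt_csSup hIne this
      obtain ⟨s, hs, rfl⟩ := hxI
      have hsI : s ∈ Ico (0:ℝ) lam := ⟨hs.1.le, hs.2⟩
      have hs0 : 0 < s := hs.1
      -- f s + κ s < (X/(2 lam)) * s ≤ X/2
      have hsmall : f s + κ * s < X / (2 * lam) * s := by
        have h5 := (lt_div_iff₀ hs0).mp hx
        nlinarith
      have htang := tangent_le lam f f' hderiv h2mono htI hsI
      have hterm : (f' t + κ) * (lam - s) ≤ 0 :=
        mul_nonpos_of_nonpos_of_nonneg (by linarith) (by linarith [hs.2])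
      have hfrac : X / (2 * lam) * s ≤ X / 2 := by
        rw [div_mul_eq_mul_div, div_le_div_iff₀ (by linarith) (by norm_num)]
        nlinarith [hs.2]
      have : X ≤ f s + κ * s + (f' t + κ) * (lam - s) := by nlinarith
      nlinarith
  -- now: t₊ < lam
  have hhtpos : 0 < f t + κ * t := by linarith
  have hθD : θ * D < κ * (1 + θ) := by
    have ha := mul_le_mul_of_nonneg_left hD1 hθ0
    have hb := mul_pos hκpos (show (0:ℝ) < 1 + θ by linarith)
    nlinarith
  have hkey2 : f t + κ * t ≤ (D - κ) * (lam - t) := by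
    rw [hD]; nlinarith [hkey]
  have hltt : (0:ℝ) < lam - t := by linarith
  have hmain : (1 + θ) * d / D < lam - t := by
    rw [div_lt_iff₀ hDpos]
    have hdh : d ≤ f t + κ * t := by linarith
    have ha := mul_le_mul_of_nonneg_left hkey2 (show (0:ℝ) ≤ 1 + θ by linarith)
    have hb := mul_lt_mul_of_pos_right hθD hltt
    have hc := mul_le_mul_of_nonneg_left hdh (show (0:ℝ) ≤ 1 + θ by linarith)
    nlinarith
  have htplam : t + (1 + θ) * d / D < lam := by linarith
  have htpI : t + (1 + θ) * d / D ∈ Ico (0:ℝ) R :=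
    ⟨by linarith, lt_of_lt_of_le htplam hlamR⟩
  -- positivity of f t₊ + ε₊
  have htangp := tangent_lt R f f' hderiv h2mono htI htpI (by linarith : t ≠ t + (1 + θ) * d / D)
  have hcanc : f' t * (t + (1 + θ) * d / D - t) = -((1 + θ) * d) := by
    rw [hD]
    field_simp [hft'ne]
    ring
  rw [hcanc] at htangp
  -- ε₊ ≤ κ t₊
  have hdivge : d ≤ d / D := by
    rw [le_div_iff₀ hDpos]
    nlinarith [mul_le_mul_of_nonneg_left hD1 hdpos.le]
  have hεκp : ε + 2 * θ * d ≤ κ * (t + (1 + θ) * d / D) := by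
    have h2θ : 2 * θ * d ≤ κ * (1 + θ) * d :=
      mul_le_mul_of_nonneg_right (by linarith : 2 * θ ≤ κ * (1 + θ)) hdpos.le
    have hmd : κ * (1 + θ) * d ≤ κ * ((1 + θ) * d / D) := by
      rw [mul_div_assoc, mul_assoc]
      exact mul_le_mul_of_nonneg_left
        (mul_le_mul_of_nonneg_left hdivge (by linarith)) hκpos.le
    have hκt := mul_le_mul_of_nonneg_left hεκ hκpos.le
    linarith
  have hθd := mul_nonneg hθ0 hdpos.le
  refine ⟨⟨?_, ?_, ?_, ?_, ?_⟩, ?_, ?_⟩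
  · rw [hstep]; linarith
  · rw [hstep]; exact htplam
  · linarith
  · rw [hstep]; exact hεκp
  · rw [hstep]
    linarith [htangp]
  · rw [hstep]; linarith
  · linarith
end

section
/- Let f be a majorant function on [0,R), κ := sup_{0<t<R}(-f(t))/t, λ := sup{t∈[0,R): κ+f'(t)<0}, θ̃ := κ/(2-κ), and let A := {(t,ε): 0≤t<λ, 0≤ε≤κt, 0<f(t)+ε}. For 0 ≤ θ ≤ θ̃ and (t,ε) ∈ A with (t₊,ε₊) = (t - (1+θ)(f(t)+ε)/f'(t), ε + 2θ(f(t)+ε)), one has f(t₊) + ε₊ < ((1+θ²)/2)(f(t)+ε). -/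
open Set

set_option maxHeartbeats 1000000

private lemma aux_hasDerivAt {R : ℝ} {f f' : ℝ → ℝ}
    (hderiv : ∀ t ∈ Ico (0:ℝ) R, HasDerivWithinAt f (f' t) (Ico 0 R) t)
    {u : ℝ} (hu : u ∈ Ioo (0:ℝ) R) : HasDerivAt f (f' u) u :=
  (hderiv u ⟨hu.1.le, hu.2⟩).hasDerivAt (Ico_mem_nhds hu.1 hu.2)

private lemma aux_chord {R : ℝ} {f' : ℝ → ℝ}
    (h2conv : ConvexOn ℝ (Ico (0:ℝ) R) f') {x u w : ℝ}
    (hx : x ∈ Ico (0:ℝ) R) (hw : w ∈ Ico (0:ℝ) R) (h1 : x < u) (h2 : u ≤ w) :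
    (f' u - f' x) * (w - x) ≤ (f' w - f' x) * (u - x) := by
  rcases eq_or_lt_of_le h2 with rfl | h2
  · ring_nf; exact le_refl _
  · have hwx : 0 < w - x := by linarith
    have key : f' (((w-u)/(w-x)) • x + ((u-x)/(w-x)) • w)
        ≤ ((w-u)/(w-x)) • f' x + ((u-x)/(w-x)) • f' w :=
      h2conv.2 hx hw (div_nonneg (by linarith) (by linarith)) (div_nonneg (by linarith) (by linarith)) (by field_simp; ring)
    have hcomb : ((w - u)/(w-x)) • x + ((u - x)/(w-x)) • w = u := by
      simp only [smul_eq_mul]; field_simp; ring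
    rw [hcomb] at key
    simp only [smul_eq_mul] at key
    have h3 := mul_le_mul_of_nonneg_right key hwx.le
    have hexp : ((w - u) / (w - x) * f' x + (u - x) / (w - x) * f' w) * (w - x)
        = (w - u) * f' x + (u - x) * f' w := by field_simp
    nlinarith [h3]

/-- strict tangent line inequality -/
private lemma aux_tangent_lt {R : ℝ} {f f' : ℝ → ℝ}
    (hderiv : ∀ t ∈ Ico (0:ℝ) R, HasDerivWithinAt f (f' t) (Ico 0 R) t)
    (h2mono : StrictMonoOn f' (Ico (0:ℝ) R)) {x y : ℝ}
    (hx : x ∈ Ico (0:ℝ) R) (hy : y ∈ Ico (0:ℝ) R) (hxy : x < y) :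
    f x + f' x * (y - x) < f y := by
  have hfc : ContinuousOn f (Ico (0:ℝ) R) := fun u hu => (hderiv u hu).continuousWithinAt
  have hsub : Icc x y ⊆ Ico (0:ℝ) R :=
    fun u hu => ⟨le_trans hx.1 hu.1, lt_of_le_of_lt hu.2 hy.2⟩
  have hmono : StrictMonoOn (fun u => f u - f' x * u) (Icc x y) := by
    apply strictMonoOn_of_deriv_pos (convex_Icc x y)
    · exact (hfc.mono hsub).sub (by fun_prop)
    · intro u hu
      rw [interior_Icc] at hu
      have huIoo : u ∈ Ioo (0:ℝ) R := ⟨lt_of_le_of_lt hx.1 hu.1, lt_trans hu.2 hy.2⟩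
      have hd : HasDerivAt (fun u => f u - f' x * u) (f' u - f' x) u := by
        simpa only [id, mul_one, Pi.sub_def] using (aux_hasDerivAt hderiv huIoo).sub ((hasDerivAt_id u).const_mul (f' x))
      rw [hd.deriv]
      have : f' x < f' u := h2mono hx (hsub ⟨hu.1.le, hu.2.le⟩) hu.1
      linarith
  have := hmono (left_mem_Icc.2 hxy.le) (right_mem_Icc.2 hxy.le) hxy
  simp only at this
  nlinarith

private lemma aux_tangent_le {R : ℝ} {f f' : ℝ → ℝ}
    (hderiv : ∀ t ∈ Ico (0:ℝ) R, HasDerivWithinAt f (f' t) (Ico 0 R) t)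
    (h2mono : StrictMonoOn f' (Ico (0:ℝ) R)) {x y : ℝ}
    (hx : x ∈ Ico (0:ℝ) R) (hy : y ∈ Ico (0:ℝ) R) (hxy : x ≤ y) :
    f x + f' x * (y - x) ≤ f y := by
  rcases eq_or_lt_of_le hxy with rfl | h
  · simp
  · exact (aux_tangent_lt hderiv h2mono hx hy h).le

/-- trapezoid bound from convexity of the derivative -/
private lemma aux_trap {R : ℝ} {f f' : ℝ → ℝ}
    (hderiv : ∀ t ∈ Ico (0:ℝ) R, HasDerivWithinAt f (f' t) (Ico 0 R) t)
    (h2conv : ConvexOn ℝ (Ico (0:ℝ) R) f') {x y : ℝ}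
    (hx : x ∈ Ico (0:ℝ) R) (hy : y ∈ Ico (0:ℝ) R) (hxy : x ≤ y) :
    f y ≤ f x + f' x * (y - x) + (f' y - f' x) * (y - x) / 2 := by
  rcases eq_or_lt_of_le hxy with rfl | h
  · simp
  have hfc : ContinuousOn f (Ico (0:ℝ) R) := fun u hu => (hderiv u hu).continuousWithinAt
  have hsub : Icc x y ⊆ Ico (0:ℝ) R :=
    fun u hu => ⟨le_trans hx.1 hu.1, lt_of_le_of_lt hu.2 hy.2⟩
  set c := (f' y - f' x) / (2 * (y - x)) with hc
  have hyx : 0 < y - x := by linarith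
  have hmono : MonotoneOn (fun u => f' x * (u - x) + c * (u - x)^2 - f u) (Icc x y) := by
    apply monotoneOn_of_deriv_nonneg (convex_Icc x y)
    · exact (by fun_prop : ContinuousOn (fun u => f' x * (u - x) + c * (u - x)^2) (Icc x y)).sub
        (hfc.mono hsub)
    · intro u hu
      rw [interior_Icc] at hu
      have huIoo : u ∈ Ioo (0:ℝ) R := ⟨lt_of_le_of_lt hx.1 hu.1, lt_trans hu.2 hy.2⟩
      have hd : HasDerivAt (fun u => f' x * (u - x) + c * (u - x)^2 - f u)
          (f' x * 1 + c * (2 * (u - x)^1 * 1) - f' u) u :=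
        ((((hasDerivAt_id u).sub_const x).const_mul (f' x)).add
          ((((hasDerivAt_id u).sub_const x).pow 2).const_mul c)).sub
          (aux_hasDerivAt hderiv huIoo)
      exact hd.differentiableAt.differentiableWithinAt
    · intro u hu
      rw [interior_Icc] at hu
      have huIoo : u ∈ Ioo (0:ℝ) R := ⟨lt_of_le_of_lt hx.1 hu.1, lt_trans hu.2 hy.2⟩
      have hd : HasDerivAt (fun u => f' x * (u - x) + c * (u - x)^2 - f u)
          (f' x * 1 + c * (2 * (u - x)^1 * 1) - f' u) u :=
        ((((hasDerivAt_id u).sub_const x).const_mul (f' x)).add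
          ((((hasDerivAt_id u).sub_const x).pow 2).const_mul c)).sub
          (aux_hasDerivAt hderiv huIoo)
      rw [hd.deriv]
      have hch := aux_chord h2conv hx hy hu.1 hu.2.le
      have h1 : f' u - f' x ≤ (f' y - f' x) * (u - x) / (y - x) := by
        rw [le_div_iff₀ hyx]; linarith
      have h2 : c * (2 * (u - x) ^ 1 * 1) = (f' y - f' x) * (u - x) / (y - x) := by
        rw [hc]; field_simp
      rw [h2]; linarith
  have h2 := hmono (left_mem_Icc.2 hxy) (right_mem_Icc.2 hxy) hxy
  simp only at h2
  have hcval : c * (y - x)^2 = (f' y - f' x) * (y - x) / 2 := by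
    rw [hc]; field_simp
  nlinarith

/-- monotonicity of `f + κ·id` from sign of `f' + κ` -/
private lemma aux_dec {R : ℝ} {f f' : ℝ → ℝ}
    (hderiv : ∀ t ∈ Ico (0:ℝ) R, HasDerivWithinAt f (f' t) (Ico 0 R) t)
    (κ : ℝ) {x y : ℝ} (hx : x ∈ Ico (0:ℝ) R) (hy : y ∈ Ico (0:ℝ) R) (hxy : x ≤ y)
    (hneg : ∀ u ∈ Ioo x y, f' u + κ ≤ 0) : f y + κ * y ≤ f x + κ * x := by
  have hfc : ContinuousOn f (Ico (0:ℝ) R) := fun u hu => (hderiv u hu).continuousWithinAt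
  have hsub : Icc x y ⊆ Ico (0:ℝ) R :=
    fun u hu => ⟨le_trans hx.1 hu.1, lt_of_le_of_lt hu.2 hy.2⟩
  have hanti : AntitoneOn (fun u => f u + κ * u) (Icc x y) := by
    apply antitoneOn_of_deriv_nonpos (convex_Icc x y)
    · exact (hfc.mono hsub).add (by fun_prop)
    · intro u hu
      rw [interior_Icc] at hu
      have hd : HasDerivAt (fun u => f u + κ * u) (f' u + κ) u := by
        simpa only [id, mul_one, Pi.add_def] using (aux_hasDerivAt hderiv
          ⟨lt_of_le_of_lt hx.1 hu.1, lt_trans hu.2 hy.2⟩).add ((hasDerivAt_id u).const_mul κ)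
      exact hd.differentiableAt.differentiableWithinAt
    · intro u hu
      rw [interior_Icc] at hu
      have hd : HasDerivAt (fun u => f u + κ * u) (f' u + κ) u := by
        simpa only [id, mul_one, Pi.add_def] using (aux_hasDerivAt hderiv
          ⟨lt_of_le_of_lt hx.1 hu.1, lt_trans hu.2 hy.2⟩).add ((hasDerivAt_id u).const_mul κ)
      rw [hd.deriv]
      exact hneg u hu
  have := hanti (left_mem_Icc.2 hxy) (right_mem_Icc.2 hxy) hxy
  simpa using this

private lemma aux_inc {R : ℝ} {f f' : ℝ → ℝ}
    (hderiv : ∀ t ∈ Ico (0:ℝ) R, HasDerivWithinAt f (f' t) (Ico 0 R) t)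
    (κ : ℝ) {x y : ℝ} (hx : x ∈ Ico (0:ℝ) R) (hy : y ∈ Ico (0:ℝ) R) (hxy : x ≤ y)
    (hpos : ∀ u ∈ Ioo x y, 0 ≤ f' u + κ) : f x + κ * x ≤ f y + κ * y := by
  have hfc : ContinuousOn f (Ico (0:ℝ) R) := fun u hu => (hderiv u hu).continuousWithinAt
  have hsub : Icc x y ⊆ Ico (0:ℝ) R :=
    fun u hu => ⟨le_trans hx.1 hu.1, lt_of_le_of_lt hu.2 hy.2⟩
  have hmono : MonotoneOn (fun u => f u + κ * u) (Icc x y) := by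
    apply monotoneOn_of_deriv_nonneg (convex_Icc x y)
    · exact (hfc.mono hsub).add (by fun_prop)
    · intro u hu
      rw [interior_Icc] at hu
      have hd : HasDerivAt (fun u => f u + κ * u) (f' u + κ) u := by
        simpa only [id, mul_one, Pi.add_def] using (aux_hasDerivAt hderiv
          ⟨lt_of_le_of_lt hx.1 hu.1, lt_trans hu.2 hy.2⟩).add ((hasDerivAt_id u).const_mul κ)
      exact hd.differentiableAt.differentiableWithinAt
    · intro u hu
      rw [interior_Icc] at hu
      have hd : HasDerivAt (fun u => f u + κ * u) (f' u + κ) u := by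
        simpa only [id, mul_one, Pi.add_def] using (aux_hasDerivAt hderiv
          ⟨lt_of_le_of_lt hx.1 hu.1, lt_trans hu.2 hy.2⟩).add ((hasDerivAt_id u).const_mul κ)
      rw [hd.deriv]
      exact hpos u hu
  have := hmono (left_mem_Icc.2 hxy) (right_mem_Icc.2 hxy) hxy
  simpa using this

private lemma aux_le_of_forall_pos {x b : ℝ} (h : ∀ δ > 0, x ≤ b + δ) : x ≤ b := by
  by_contra hc; push_neg at hc
  have := h ((x - b)/2) (by linarith)
  linarith

private lemma aux_lim {Y L B : ℝ} (hY : 0 ≤ Y) (h : ∀ η > 0, Y * L ≤ B + Y * η) :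
    Y * L ≤ B := by
  by_contra hc; push_neg at hc
  have hY1 : (0:ℝ) < Y + 1 := by linarith
  have h1 := h ((Y * L - B) / (2 * (Y + 1))) (div_pos (by linarith) (by linarith))
  have h2 : Y * ((Y * L - B) / (2 * (Y + 1))) ≤ (Y * L - B) / 2 := by
    rw [mul_div_assoc', div_le_div_iff₀ (by positivity) (by norm_num)]
    nlinarith
  linarith

/-- along the inexact Newton iteration on the majorant function,
`f t₊ + ε₊ < ((1+θ²)/2)(f t + ε)`. -/
theorem stmt7 (R : ℝ) (hR : 0 < R) (f f' : ℝ → ℝ)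
    (hderiv : ∀ t ∈ Ico (0:ℝ) R, HasDerivWithinAt f (f' t) (Ico 0 R) t)
    (hcont : ContinuousOn f' (Ico 0 R))
    (h1 : 0 < f 0) (h1' : f' 0 = -1)
    (h2conv : ConvexOn ℝ (Ico 0 R) f')
    (h2mono : StrictMonoOn f' (Ico 0 R))
    (h3 : ∃ t ∈ Ioo (0:ℝ) R, f t = 0)
    (h4 : ∃ t ∈ Ioo (0:ℝ) R, f t < 0)
    (κ lam θ : ℝ)
    (hκ : κ = sSup ((fun t => -f t / t) '' Ioo (0:ℝ) R))
    (hlam : lam = sSup {t ∈ Ico (0:ℝ) R | κ + f' t < 0})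
    (hθ0 : 0 ≤ θ) (hθ : θ ≤ κ / (2 - κ))
    (A : Set (ℝ × ℝ))
    (hA : A = {p : ℝ × ℝ | 0 ≤ p.1 ∧ p.1 < lam ∧ 0 ≤ p.2 ∧ p.2 ≤ κ * p.1 ∧
      0 < f p.1 + p.2})
    (t ε : ℝ) (ht : (t, ε) ∈ A) :
    f (t - (1 + θ) * (f t + ε) / f' t) + (ε + 2 * θ * (f t + ε)) <
      ((1 + θ ^ 2) / 2) * (f t + ε) := by
  rw [hA] at ht
  simp only [mem_setOf_eq] at ht
  obtain ⟨ht0, htlam, hε0, hεκ, hfv0⟩ := ht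
  clear hA
  obtain ⟨v, hvdef⟩ : ∃ v, v = f t + ε := ⟨_, rfl⟩
  have hv0 : 0 < v := hvdef ▸ hfv0
  -- basic facts about S and lam
  have hS1 : Set.Nonempty {t ∈ Ico (0:ℝ) R | κ + f' t < 0} := by
    by_contra hemp
    rw [not_nonempty_iff_eq_empty] at hemp
    rw [hemp, Real.sSup_empty] at hlam
    rw [hlam] at htlam; linarith
  have hSbdd : BddAbove {t ∈ Ico (0:ℝ) R | κ + f' t < 0} := ⟨R, fun u hu => hu.1.2.le⟩
  have hlamR : lam ≤ R := by
    rw [hlam]; exact csSup_le hS1 (fun u hu => hu.1.2.le)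
  have htIco : t ∈ Ico (0:ℝ) R := ⟨ht0, lt_of_lt_of_le htlam hlamR⟩
  have hf'neg : ∀ u ∈ Ico (0:ℝ) R, u < lam → f' u < -κ := by
    intro u hu hul
    obtain ⟨w, hwS, huw⟩ := exists_lt_of_lt_csSup hS1 (hlam ▸ hul)
    have := h2mono hu hwS.1 huw
    linarith [hwS.2]
  -- κ facts
  have hEne : ((fun t => -f t / t) '' Ioo (0:ℝ) R).Nonempty :=
    ⟨_, mem_image_of_mem _ (⟨half_pos hR, half_lt_self hR⟩ : R/2 ∈ Ioo (0:ℝ) R)⟩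
  have h0Ico : (0:ℝ) ∈ Ico (0:ℝ) R := ⟨le_refl _, hR⟩
  have hbound : ∀ u ∈ Ioo (0:ℝ) R, -f u / u ≤ 1 := by
    intro u hu
    have h := aux_tangent_le hderiv h2mono h0Ico ⟨hu.1.le, hu.2⟩ hu.1.le
    rw [h1'] at h
    rw [div_le_one hu.1]
    linarith
  have hEbdd : BddAbove ((fun t => -f t / t) '' Ioo (0:ℝ) R) := by
    refine ⟨1, ?_⟩
    rintro e ⟨u, hu, rfl⟩
    exact hbound u hu
  have hκ1 : κ ≤ 1 := by
    rw [hκ]; exact csSup_le hEne (by rintro e ⟨u, hu, rfl⟩; exact hbound u hu)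
  have hκ0 : 0 < κ := by
    obtain ⟨u, hu, hfu⟩ := h4
    have h5 : -f u / u ≤ κ := hκ ▸ le_csSup hEbdd (mem_image_of_mem _ hu)
    have h6 : 0 < -f u / u := div_pos (by linarith) hu.1
    linarith
  have hκa : κ < -f' t := by have := hf'neg t htIco htlam; linarith
  have ha0 : (0:ℝ) < -f' t := lt_trans hκ0 hκa
  have ha1 : -f' t ≤ 1 := by
    have h7 : f' 0 ≤ f' t := h2mono.monotoneOn h0Ico htIco ht0
    rw [h1'] at h7; linarith
  have hθ2 : 2 * θ ≤ κ * (1 + θ) := by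
    rw [le_div_iff₀ (by linarith : (0:ℝ) < 2 - κ)] at hθ
    linarith
  have hKEY3 : (1 + θ) * (-f' t - κ) ≤ (1 - θ) * (-f' t) := by
    have h8 := mul_le_mul_of_nonneg_left ha1 (by linarith : (0:ℝ) ≤ 2 * θ)
    linarith
  have hθ1 : θ < 1 := by
    have h9 : (0:ℝ) < (1 + θ) * (-f' t - κ) := mul_pos (by linarith) (by linarith)
    nlinarith
  -- points with small f w + κ w
  have hwit : ∀ δ > 0, ∃ w ∈ Ioo (0:ℝ) R, f w + κ * w < δ := by
    intro δ hδ
    have hδR : 0 < δ / R := div_pos hδ hR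
    have hlt : κ - δ / R < sSup ((fun t => -f t / t) '' Ioo (0:ℝ) R) := by
      rw [← hκ]; linarith
    obtain ⟨e, he, hlte⟩ := exists_lt_of_lt_csSup hEne hlt
    obtain ⟨u, hu, rfl⟩ := he
    refine ⟨u, hu, ?_⟩
    rw [lt_div_iff₀ hu.1] at hlte
    have hdR : δ / R * R = δ := div_mul_cancel₀ δ hR.ne'
    have h10 := mul_lt_mul_of_pos_left hu.2 hδR
    linarith
  -- KEY1 : f t + κ t < (lam - t) (-f' t - κ)
  have hKEY1 : f t + κ * t < (lam - t) * (-f' t - κ) := by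
    rcases lt_or_eq_of_le hlamR with hlR | hlR
    · -- lam < R
      have hlamIco : lam ∈ Ico (0:ℝ) R := ⟨le_trans ht0 htlam.le, hlR⟩
      have hglam : f lam + κ * lam ≤ 0 := by
        have hstep : ∀ δ > 0, f lam + κ * lam ≤ 0 + δ := by
          intro δ hδ
          obtain ⟨w, hw, hwδ⟩ := hwit δ hδ
          rcases le_total w lam with hcase | hcase
          · have := aux_dec hderiv κ (x := w) (y := lam) ⟨hw.1.le, hw.2⟩ hlamIco hcase
              (fun u hu => by
                have := hf'neg u ⟨le_trans hw.1.le hu.1.le, lt_trans hu.2 hlR⟩ hu.2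
                linarith)
            linarith
          · have := aux_inc hderiv κ (x := lam) (y := w) hlamIco ⟨hw.1.le, hw.2⟩ hcase
              (fun u hu => by
                by_contra hc; push_neg at hc
                have huS : u ∈ {t ∈ Ico (0:ℝ) R | κ + f' t < 0} :=
                  ⟨⟨le_trans (le_trans ht0 htlam.le) hu.1.le, lt_trans hu.2 hw.2⟩,
                    by linarith⟩
                have := hlam ▸ le_csSup hSbdd huS
                linarith [hu.1])
            linarith
        linarith [aux_le_of_forall_pos hstep]
      have htan := aux_tangent_lt hderiv h2mono htIco hlamIco htlam
      nlinarith [htan, hglam]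
    · -- lam = R
      have hf'all : ∀ u ∈ Ico (0:ℝ) R, f' u < -κ :=
        fun u hu => hf'neg u hu (by rw [hlR]; exact hu.2)
      have htR : t < R := lt_of_lt_of_le htlam hlamR
      obtain ⟨p, hpdef⟩ : ∃ p, p = (t + R)/2 := ⟨_, rfl⟩
      obtain ⟨q, hqdef⟩ : ∃ q, q = (p + R)/2 := ⟨_, rfl⟩
      have htp : t < p := by rw [hpdef]; linarith
      have hpq : p < q := by rw [hqdef, hpdef]; linarith
      have hqR : q < R := by rw [hqdef, hpdef]; linarith
      have hpIco : p ∈ Ico (0:ℝ) R := ⟨by linarith, by linarith⟩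
      have hqIco : q ∈ Ico (0:ℝ) R := ⟨by linarith, hqR⟩
      have haa' : f' t < f' p := h2mono htIco hpIco htp
      have hc0 : 0 < (f' p - f' t) * (q - p) := mul_pos (by linarith) (by linarith)
      have hmain : ∀ δ > 0,
          f t + κ * t ≤ ((R - t) * (-f' t - κ) - (f' p - f' t) * (q - p)) + δ := by
        intro δ hδ
        obtain ⟨w0, hw0, hw0δ⟩ := hwit δ hδ
        have hww0 : w0 ≤ max w0 q := le_max_left _ _
        have hqw : q ≤ max w0 q := le_max_right _ _
        have hwR : max w0 q < R := max_lt hw0.2 hqR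
        have hwIco : max w0 q ∈ Ico (0:ℝ) R := ⟨le_trans hw0.1.le hww0, hwR⟩
        have hwδ : f (max w0 q) + κ * max w0 q < δ := by
          have := aux_dec hderiv κ (x := w0) (y := max w0 q) ⟨hw0.1.le, hw0.2⟩ hwIco hww0
            (fun u hu => by
              have := hf'all u ⟨le_trans hw0.1.le hu.1.le, lt_trans hu.2 hwR⟩
              linarith)
          linarith
        have ht1 := aux_tangent_le hderiv h2mono htIco hpIco htp.le
        have ht2 := aux_tangent_le hderiv h2mono hpIco hwIco (le_trans hpq.le hqw)
        have e1 : (max w0 q - t) * (-f' t - κ) ≤ (R - t) * (-f' t - κ) :=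
          mul_le_mul_of_nonneg_right (by linarith) (by linarith)
        have e2 : (f' p - f' t) * (q - p) ≤ (f' p - f' t) * (max w0 q - p) :=
          mul_le_mul_of_nonneg_left (by linarith) (by linarith)
        nlinarith [ht1, ht2, hwδ, e1, e2]
      have := aux_le_of_forall_pos hmain
      rw [hlR]
      linarith
  have hKEY1v : v < (lam - t) * (-f' t - κ) := by
    have : v ≤ f t + κ * t := by rw [hvdef]; linarith
    linarith
  -- the step s
  obtain ⟨s, hsdef⟩ : ∃ s, s = (1 + θ) * v / (-f' t) := ⟨_, rfl⟩
  have hs0 : 0 < s := by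
    rw [hsdef]; exact div_pos (mul_pos (by linarith) hv0) ha0
  have hne : f' t ≠ 0 := ne_of_lt (by linarith : f' t < 0)
  have hsa : (-f' t) * s = (1 + θ) * v := by
    rw [hsdef]; field_simp
  have hlamt : 0 < lam - t := by linarith
  have hslt : s < lam - t := by
    have m1 := mul_lt_mul_of_pos_left hKEY1v (by linarith : (0:ℝ) < 1 + θ)
    have m2 := mul_le_mul_of_nonneg_right hKEY3 hlamt.le
    have m3 : 0 ≤ θ * ((-f' t) * (lam - t)) :=
      mul_nonneg hθ0 (mul_nonneg ha0.le hlamt.le)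
    have m4 : (-f' t) * s < (-f' t) * (lam - t) := by nlinarith [m1, m2, m3, hsa]
    exact lt_of_mul_lt_mul_left m4 ha0.le
  have hT : t + s ∈ Ico (0:ℝ) R := ⟨by linarith, by linarith⟩
  have hY0 : 0 ≤ f' (t + s) - f' t := by
    have := h2mono.monotoneOn htIco hT (by linarith : t ≤ t + s)
    linarith
  -- KEY2
  have hKEY2 : (f' (t + s) - f' t) * (lam - t) ≤ s * (-f' t - κ) := by
    apply aux_lim hY0
    intro η hη
    have hw1 : t + s < max ((t + s + lam)/2) (lam - η) :=
      lt_of_lt_of_le (by linarith : t + s < (t + s + lam)/2) (le_max_left _ _)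
    have hw2 : max ((t + s + lam)/2) (lam - η) < lam := max_lt (by linarith) (by linarith)
    have hw3 : lam - η ≤ max ((t + s + lam)/2) (lam - η) := le_max_right _ _
    have hwIco : max ((t + s + lam)/2) (lam - η) ∈ Ico (0:ℝ) R :=
      ⟨by linarith, lt_of_lt_of_le hw2 hlamR⟩
    have hch := aux_chord h2conv htIco hwIco (by linarith : t < t + s) hw1.le
    have hts' : t + s - t = s := by ring
    rw [hts'] at hch
    have hf'w : f' (max ((t + s + lam)/2) (lam - η)) < -κ := hf'neg _ hwIco hw2
    have h11 : (f' (max ((t + s + lam)/2) (lam - η)) - f' t) * s ≤ (-f' t - κ) * s :=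
      mul_le_mul_of_nonneg_right (by linarith) hs0.le
    have hYw : (f' (t + s) - f' t) * (lam - max ((t + s + lam)/2) (lam - η))
        ≤ (f' (t + s) - f' t) * η := mul_le_mul_of_nonneg_left (by linarith) hY0
    nlinarith [hch, h11, hYw]
  -- trapezoid bound
  have hTRAP := aux_trap hderiv h2conv htIco hT (by linarith : t ≤ t + s)
  have hts' : t + s - t = s := by ring
  rw [hts'] at hTRAP
  -- rewrite the goal
  rw [← hvdef]
  have hrw : t - (1 + θ) * v / f' t = t + s := by
    rw [hsdef, div_neg, ← sub_eq_add_neg]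
  rw [hrw]
  -- core estimate : Y s < (1-θ)^2 v
  have h2' : s * (-f' t - κ) ≤ (1 - θ) * v := by
    have h12 := mul_le_mul_of_nonneg_left hKEY3 hs0.le
    have h13 : (1 - θ) * ((-f' t) * s) = (1 - θ) * ((1 + θ) * v) := by rw [hsa]
    have h14 : (1 + θ) * (s * (-f' t - κ)) ≤ (1 + θ) * ((1 - θ) * v) := by
      nlinarith [h12, h13]
    exact le_of_mul_le_mul_left h14 (by linarith)
  have h1' : (f' (t + s) - f' t) * v < (s * (-f' t - κ)) * (-f' t - κ) := by
    rcases eq_or_lt_of_le hY0 with hYe | hYe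
    · have hz : (f' (t + s) - f' t) * v = 0 := by rw [← hYe]; ring
      have hpos : 0 < (s * (-f' t - κ)) * (-f' t - κ) :=
        mul_pos (mul_pos hs0 (by linarith)) (by linarith)
      linarith
    · have c1 := mul_lt_mul_of_pos_left hKEY1v hYe
      have c3 := mul_le_mul_of_nonneg_right hKEY2 (by linarith : (0:ℝ) ≤ -f' t - κ)
      nlinarith [c1, c3]
  have hYs : (f' (t + s) - f' t) * s < (1 - θ)^2 * v := by
    have hd1 := mul_lt_mul_of_pos_right h1' hs0
    have hd2 := mul_self_le_mul_self
      (mul_nonneg hs0.le (by linarith : (0:ℝ) ≤ -f' t - κ)) h2'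
    have hd3 : ((f' (t + s) - f' t) * s) * v < ((1 - θ)^2 * v) * v := by
      nlinarith [hd1, hd2]
    exact lt_of_mul_lt_mul_right hd3 hv0.le
  -- final assembly
  nlinarith [hTRAP, hYs, hsa, hvdef, hv0]
end

section
/- Let f be a majorant function on [0,R) and define the linearization error e_f(v,t) := f(v) - [f(t) + f'(t)(v-t)]. If 0 ≤ b ≤ t, 0 ≤ a ≤ s, t+s < R and s ≠ 0, then e_f(a+b, b) ≤ max{ e_f(t+s, t), (1/2)·((f'(t+s)-f'(t))/s)·a² }. -/
open Set

/-- monotonicity-type bound for the linearization error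
`e_f(v,t) = f v - (f t + f' t (v - t))`. -/
theorem stmt8 (R : ℝ) (hR : 0 < R) (f f' : ℝ → ℝ)
    (hderiv : ∀ t ∈ Ico (0:ℝ) R, HasDerivWithinAt f (f' t) (Ico 0 R) t)
    (hcont : ContinuousOn f' (Ico 0 R))
    (h2conv : ConvexOn ℝ (Ico 0 R) f')
    (h2mono : StrictMonoOn f' (Ico 0 R))
    (e : ℝ → ℝ → ℝ) (he : ∀ v t, e v t = f v - (f t + f' t * (v - t)))
    (a b s t : ℝ) (hb : 0 ≤ b) (hbt : b ≤ t) (ha : 0 ≤ a) (has : a ≤ s)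
    (hts : t + s < R) (hs : s ≠ 0) :
    e (a + b) b ≤ max (e (t + s) t) ((1 / 2) * ((f' (t + s) - f' t) / s) * a ^ 2) := by
  have hspos : 0 < s := lt_of_le_of_ne (ha.trans has) (Ne.symm hs)
  set c : ℝ := (f' (t + s) - f' t) / s with hc
  -- memberships
  have hmemts : t + s ∈ Ico (0:ℝ) R := ⟨by linarith, hts⟩
  have hmemt : t ∈ Ico (0:ℝ) R := ⟨by linarith, by linarith⟩
  have hmemb : b ∈ Ico (0:ℝ) R := ⟨hb, by linarith⟩
  have hsub : Icc b (a + b) ⊆ Ico (0:ℝ) R := fun v hv =>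
    ⟨hb.trans hv.1, lt_of_le_of_lt hv.2 (by linarith)⟩
  -- key pointwise bound on the derivative
  have key : ∀ v ∈ Ioo b (a + b), f' v - f' b - c * (v - b) ≤ 0 := by
    intro v hv
    have hvmem : v ∈ Ico (0:ℝ) R := hsub ⟨hv.1.le, hv.2.le⟩
    have hvb : b < v := hv.1
    have hvts : v ≤ t + s := by
      have := hv.2; linarith
    have h1 : (f' v - f' b) / (v - b) ≤ (f' (t + s) - f' b) / (t + s - b) :=
      h2conv.secant_mono hmemb hvmem hmemts (ne_of_gt hvb) (by intro h; linarith [h ▸ hvb]) hvts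
    have h2 : (f' b - f' (t + s)) / (b - (t + s)) ≤ (f' t - f' (t + s)) / (t - (t + s)) :=
      h2conv.secant_mono hmemts hmemb hmemt (by intro h; linarith [hvb, hvts, h])
        (by intro h; linarith) hbt
    have h2' : (f' (t + s) - f' b) / (t + s - b) ≤ c := by
      have e1 : (f' b - f' (t + s)) / (b - (t + s)) = (f' (t + s) - f' b) / (t + s - b) := by
        rw [← neg_div_neg_eq]; ring_nf
      have e2 : (f' t - f' (t + s)) / (t - (t + s)) = c := by
        rw [hc, ← neg_div_neg_eq]; ring_nf
      rw [e1, e2] at h2; exact h2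
    have hle : (f' v - f' b) / (v - b) ≤ c := h1.trans h2'
    have := (div_le_iff₀ (by linarith : (0:ℝ) < v - b)).mp hle
    linarith
  -- auxiliary function
  set g : ℝ → ℝ := fun v => f v - f' b * v - c / 2 * (v - b) ^ 2 with hg
  have hanti : AntitoneOn g (Icc b (a + b)) := by
    apply antitoneOn_of_hasDerivWithinAt_nonpos (convex_Icc _ _)
      (f' := fun v => f' v - f' b - c * (v - b))
    · -- continuity of g on Icc
      have hfc : ContinuousOn f (Icc b (a + b)) := fun v hv =>
        ((hderiv v (hsub hv)).mono hsub).continuousWithinAt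
      exact (hfc.sub (continuousOn_const.mul continuousOn_id)).sub
        ((continuousOn_const.mul (((continuousOn_id.sub continuousOn_const).pow 2))))
    · intro v hv
      rw [interior_Icc] at hv ⊢
      have hvmem : v ∈ Ico (0:ℝ) R := hsub ⟨hv.1.le, hv.2.le⟩
      have hfd : HasDerivWithinAt f (f' v) (Ioo b (a + b)) v :=
        (hderiv v hvmem).mono (fun x hx => hsub ⟨hx.1.le, hx.2.le⟩)
      have hq : HasDerivAt (fun v : ℝ => c / 2 * (v - b) ^ 2) (c * (v - b)) v := by
        have h0 : HasDerivAt (fun v : ℝ => (v - b) ^ 2) (2 * (v - b)) v := by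
          simpa using ((hasDerivAt_id v).sub_const b).fun_pow 2
        have := h0.const_mul (c / 2)
        rw [show c * (v - b) = c / 2 * (2 * (v - b)) by ring]; exact this
      have hl : HasDerivAt (fun v : ℝ => f' b * v) (f' b) v := by
        simpa using (hasDerivAt_id v).const_mul (f' b)
      exact (hfd.sub (hl.hasDerivWithinAt)).sub (hq.hasDerivWithinAt)
    · intro v hv
      rw [interior_Icc] at hv
      exact key v hv
  have hmono := hanti (left_mem_Icc.mpr (by linarith)) (right_mem_Icc.mpr (by linarith))
    (by linarith : b ≤ a + b)
  -- expand
  have hbound : e (a + b) b ≤ (1 / 2) * c * a ^ 2 := by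
    rw [he]
    simp only [hg] at hmono
    nlinarith [hmono]
  exact hbound.trans (le_max_right _ _)
end

section
/- Let f be a majorant function on [0,R) satisfying (h4) with β := sup{-f(t): t∈[0,R)}. For 0 ≤ ρ < β/2, the function g:[0,R-ρ)→ℝ defined by g(t) := (-1/f'(ρ))·[f(t+ρ) + 2ρ] is again a majorant function: g(0) > 0, g'(0) = -1, g' is convex and strictly increasing on [0,R-ρ), and g(t) < 0 for some t ∈ (0, R-ρ). -/
open Set

/-- for `0 ≤ ρ < β/2`, the function `g t = (-1/f' ρ)(f (t+ρ) + 2ρ)`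
is again a majorant function on `[0, R-ρ)` satisfying (h4). -/
theorem stmt9 (R : ℝ) (hR : 0 < R) (f f' : ℝ → ℝ)
    (hderiv : ∀ t ∈ Ico (0:ℝ) R, HasDerivWithinAt f (f' t) (Ico 0 R) t)
    (hcont : ContinuousOn f' (Ico 0 R))
    (h1 : 0 < f 0) (h1' : f' 0 = -1)
    (h2conv : ConvexOn ℝ (Ico 0 R) f')
    (h2mono : StrictMonoOn f' (Ico 0 R))
    (h3 : ∃ t ∈ Ioo (0:ℝ) R, f t = 0)
    (h4 : ∃ t ∈ Ioo (0:ℝ) R, f t < 0)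
    (β : ℝ) (hβ : β = sSup ((fun t => -f t) '' Ico (0:ℝ) R))
    (ρ : ℝ) (hρ0 : 0 ≤ ρ) (hρ : ρ < β / 2)
    (g g' : ℝ → ℝ)
    (hg : ∀ t, g t = (-1 / f' ρ) * (f (t + ρ) + 2 * ρ))
    (hg' : ∀ t, g' t = (-1 / f' ρ) * f' (t + ρ)) :
    (∀ t ∈ Ico (0:ℝ) (R - ρ), HasDerivWithinAt g (g' t) (Ico 0 (R - ρ)) t) ∧
      0 < g 0 ∧ g' 0 = -1 ∧
      ConvexOn ℝ (Ico (0:ℝ) (R - ρ)) g' ∧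
      StrictMonoOn g' (Ico (0:ℝ) (R - ρ)) ∧
      (∃ t ∈ Ioo (0:ℝ) (R - ρ), g t < 0) := by
  have hfc : ContinuousOn f (Ico 0 R) := fun t ht => (hderiv t ht).continuousWithinAt
  have hint : interior (Ico (0:ℝ) R) = Ioo 0 R := interior_Ico
  -- f t + t is monotone, so f t ≥ f 0 - t
  have hmonoaux : MonotoneOn (fun t => f t + t) (Ico 0 R) := by
    apply monotoneOn_of_hasDerivWithinAt_nonneg (convex_Ico 0 R)
      (f' := fun t => f' t + 1)
      (hfc.add continuousOn_id)
    · intro x hx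
      rw [hint] at hx ⊢
      exact ((hderiv x (Ioo_subset_Ico_self hx)).mono Ioo_subset_Ico_self).add
        (hasDerivWithinAt_id x _)
    · intro x hx
      rw [hint] at hx
      have := h2mono (left_mem_Ico.2 hR) (Ioo_subset_Ico_self hx) hx.1
      rw [h1'] at this
      linarith
  have hlb : ∀ t ∈ Ico (0:ℝ) R, f 0 - t ≤ f t := by
    intro t ht
    have := hmonoaux (left_mem_Ico.2 hR) ht ht.1
    simp only [add_zero] at this
    linarith
  -- find t̄ with f t̄ + 2ρ < 0
  obtain ⟨a, ⟨tb, htb, rfl⟩, ha⟩ : ∃ a ∈ ((fun t => -f t) '' Ico (0:ℝ) R), 2 * ρ < a := by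
    apply exists_lt_of_lt_csSup
    · exact (nonempty_Ico.2 hR).image _
    · rw [← hβ]; linarith
  simp only at ha
  have htbf : f tb < -(2 * ρ) := by linarith
  have htb2ρ : 2 * ρ < tb := by
    have := hlb tb htb
    nlinarith [h1]
  have htbρ : ρ < tb := lt_of_le_of_lt (by linarith) htb2ρ
  have hρR : ρ < R := htbρ.trans htb.2
  have hρmem : ρ ∈ Ico (0:ℝ) R := ⟨hρ0, hρR⟩
  -- f' ρ < 0
  have hf'ρ : f' ρ < 0 := by
    rcases eq_or_lt_of_le hρ0 with h | h
    · rw [← h, h1']; norm_num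
    · by_contra hge
      push_neg at hge
      -- f is strictly monotone on Ico ρ R
      have hsm : StrictMonoOn f (Ico ρ R) := by
        apply strictMonoOn_of_hasDerivWithinAt_pos (convex_Ico ρ R)
          (f' := f') (hfc.mono (Ico_subset_Ico_left hρ0))
        · intro x hx
          rw [interior_Ico] at hx ⊢
          exact ((hderiv x ⟨hρ0.trans hx.1.le, hx.2⟩).mono
            (fun y hy => ⟨hρ0.trans hy.1.le, hy.2⟩))
        · intro x hx
          rw [interior_Ico] at hx
          have := h2mono hρmem ⟨hρ0.trans hx.1.le, hx.2⟩ hx.1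
          linarith
      have : f ρ < f tb := hsm (left_mem_Ico.2 (htbρ.trans htb.2)) ⟨htbρ.le, htb.2⟩ htbρ
      have := hlb ρ hρmem
      nlinarith
  set c : ℝ := -1 / f' ρ with hc
  have hcpos : 0 < c := div_pos_iff.2 (Or.inr ⟨by norm_num, hf'ρ⟩)
  have hmap : ∀ t ∈ Ico (0:ℝ) (R - ρ), t + ρ ∈ Ico (0:ℝ) R := by
    intro t ht
    exact ⟨by linarith [ht.1], by linarith [ht.2]⟩
  have hgfun : g = fun t => c * (f (t + ρ) + 2 * ρ) := funext hg
  have hg'fun : g' = fun t => c * f' (t + ρ) := funext hg'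
  refine ⟨?_, ?_, ?_, ?_, ?_, ?_⟩
  · intro t ht
    rw [hgfun, hg' t]
    have h1d : HasDerivWithinAt (fun s => f (s + ρ)) (f' (t + ρ)) (Ico 0 (R - ρ)) t := by
      have := (hderiv (t + ρ) (hmap t ht)).comp t
        ((hasDerivWithinAt_id t (Ico (0:ℝ) (R - ρ))).add_const ρ) hmap
      simpa [Function.comp_def] using this
    simpa using ((h1d.add_const (2 * ρ)).const_mul c)
  · rw [hg 0, zero_add]
    have := hlb ρ hρmem
    have : 0 < f ρ + 2 * ρ := by nlinarith [h1]
    exact mul_pos hcpos this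
  · rw [hg' 0, zero_add]
    exact div_mul_cancel₀ (-1) hf'ρ.ne
  · rw [hg'fun]
    have hcomp : ConvexOn ℝ (Ico (0:ℝ) (R - ρ)) (fun t => f' (t + ρ)) := by
      refine ⟨convex_Ico 0 (R - ρ), ?_⟩
      intro x hx y hy a b ha hb hab
      have := h2conv.2 (hmap x hx) (hmap y hy) ha hb hab
      have heq : a • (x + ρ) + b • (y + ρ) = (a • x + b • y) + ρ := by
        simp only [smul_eq_mul]; nlinarith
      rw [heq] at this
      simpa using this
    exact hcomp.smul hcpos.le
  · rw [hg'fun]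
    intro x hx y hy hxy
    have := h2mono (hmap x hx) (hmap y hy) (by linarith)
    exact mul_lt_mul_of_pos_left this hcpos
  · refine ⟨tb - ρ, ⟨by linarith, by linarith [htb.2]⟩, ?_⟩
    rw [hg, sub_add_cancel]
    have : f tb + 2 * ρ < 0 := by linarith
    exact mul_neg_of_pos_of_neg hcpos this
end

section
/- Fix γ>0, b>0 with bγ < 3 - 2√2 and f(t) = t/(1-γt) - 2t + b on [0,1/γ). Then with κ := sup_{0<t<1/γ}(-f(t))/t, one has κ = 1 - 2√(γb) - γb, and λ := sup{t∈[0,1/γ): κ+f'(t)<0} = b/(√(γb) + γb). -/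
open Set

set_option maxHeartbeats 800000

/-- for `f t = t/(1-γt) - 2t + b` with `bγ < 3 - 2√2`:
`κ = 1 - 2√(γb) - γb` and `λ = b/(√(γb) + γb)`. -/
theorem stmt13 (γ b : ℝ) (hγ : 0 < γ) (hb : 0 < b)
    (hbγ : b * γ < 3 - 2 * Real.sqrt 2)
    (f f' : ℝ → ℝ)
    (hf : ∀ t, f t = t / (1 - γ * t) - 2 * t + b)
    (hf' : ∀ t, f' t = 1 / (1 - γ * t) ^ 2 - 2)
    (κ : ℝ) (hκ : κ = sSup ((fun t => -f t / t) '' Ioo (0:ℝ) (1 / γ))) :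
    κ = 1 - 2 * Real.sqrt (γ * b) - γ * b ∧
      sSup {t ∈ Ico (0:ℝ) (1 / γ) | κ + f' t < 0} =
        b / (Real.sqrt (γ * b) + γ * b) := by
  set c := Real.sqrt (γ * b) with hcdef
  have hγb : 0 < γ * b := mul_pos hγ hb
  have hc : 0 < c := Real.sqrt_pos.mpr hγb
  have hc2 : c ^ 2 = γ * b := Real.sq_sqrt hγb.le
  have hden : 0 < c + γ * b := by linarith
  set T := b / (c + γ * b) with hTdef
  have hT0 : 0 < T := div_pos hb hden
  have hTb : T * (c + γ * b) = b := div_mul_cancel₀ _ hden.ne'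
  have hγT : γ * T * (1 + c) = c := by
    have h' : c * (γ * T * (1 + c)) = c * c := by
      linear_combination γ * hTb + (γ * T - 1) * hc2
    exact mul_left_cancel₀ hc.ne' h'
  have h1c : (1 - γ * T) * (1 + c) = 1 := by linear_combination -hγT
  have h1Tpos : 0 < 1 - γ * T := by nlinarith [h1c, hc]
  have hTlt : T < 1 / γ := by
    rw [lt_div_iff₀ hγ]; nlinarith [h1Tpos]
  have h1cpos : (0:ℝ) < 1 + c := by linarith
  -- key nonnegativity: γ(1+c)²t² - 2c(1+c)t + b ≥ 0
  have key : ∀ t : ℝ, 0 ≤ γ * (1 + c) ^ 2 * t ^ 2 - 2 * c * (1 + c) * t + b := by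
    intro t
    nlinarith [sq_nonneg (γ * (1 + c) * t - c), hc2, hγ]
  -- upper bound
  have ub : ∀ t ∈ Ioo (0:ℝ) (1 / γ), -f t / t ≤ 1 - 2 * c - γ * b := by
    rintro t ⟨ht0, ht1⟩
    have h1 : 0 < 1 - γ * t := by
      have := (lt_div_iff₀ hγ).mp ht1; nlinarith
    rw [hf, div_le_iff₀ ht0]
    have h2 : -(t / (1 - γ * t) - 2 * t + b) = ((2 * t - b) * (1 - γ * t) - t) / (1 - γ * t) := by
      rw [eq_div_iff h1.ne']
      have e : t / (1 - γ * t) * (1 - γ * t) = t := div_mul_cancel₀ _ h1.ne'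
      linear_combination -e
    rw [h2, div_le_iff₀ h1, ← hc2]
    nlinarith [key t]
  -- value at T
  have hval : -f T / T = 1 - 2 * c - γ * b := by
    rw [hf, div_eq_iff hT0.ne']
    have e : T / (1 - γ * T) = T * (1 + c) := by
      rw [div_eq_iff h1Tpos.ne']
      linear_combination -T * h1c
    rw [e]
    linear_combination hTb
  have hgreat : IsGreatest ((fun t => -f t / t) '' Ioo (0:ℝ) (1 / γ)) (1 - 2 * c - γ * b) := by
    constructor
    · exact ⟨T, ⟨hT0, hTlt⟩, hval⟩
    · rintro y ⟨t, ht, rfl⟩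
      exact ub t ht
  have part1 : κ = 1 - 2 * c - γ * b := hκ.trans hgreat.csSup_eq
  refine ⟨part1, ?_⟩
  have hset : {t ∈ Ico (0:ℝ) (1 / γ) | κ + f' t < 0} = Ico 0 T := by
    ext t
    simp only [mem_setOf_eq, mem_Ico, hf', part1]
    constructor
    · rintro ⟨⟨ht0, ht1⟩, hlt⟩
      refine ⟨ht0, ?_⟩
      have h1 : 0 < 1 - γ * t := by
        have := (lt_div_iff₀ hγ).mp ht1; nlinarith
      have h2 : 1 / (1 - γ * t) ^ 2 < (1 + c) ^ 2 := by nlinarith [hc2]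
      have h3 : 1 < ((1 - γ * t) * (1 + c)) ^ 2 := by
        have e : ((1 - γ * t) * (1 + c)) ^ 2 = (1 + c) ^ 2 * (1 - γ * t) ^ 2 := by ring
        rw [e]
        exact (div_lt_iff₀ (pow_pos h1 2)).mp h2
      have h4 : 1 < (1 - γ * t) * (1 + c) := by
        by_contra h
        push_neg at h
        have hnn : 0 ≤ (1 - γ * t) * (1 + c) := le_of_lt (mul_pos h1 h1cpos)
        have : ((1 - γ * t) * (1 + c)) ^ 2 ≤ 1 := pow_le_one₀ hnn h
        linarith
      have h5 : γ * (1 + c) * t < γ * (1 + c) * T := by nlinarith [h4, hγT]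
      exact lt_of_mul_lt_mul_left h5 (by positivity)
    · rintro ⟨ht0, htT⟩
      have hγtT : γ * t < γ * T := mul_lt_mul_of_pos_left htT hγ
      have h1 : 0 < 1 - γ * t := by linarith [h1Tpos]
      refine ⟨⟨ht0, htT.trans hTlt⟩, ?_⟩
      have h6 : γ * (1 + c) * t < γ * (1 + c) * T :=
        mul_lt_mul_of_pos_left htT (by positivity)
      have h4 : 1 < (1 - γ * t) * (1 + c) := by nlinarith [h6, hγT]
      have h7 : 1 / (1 - γ * t) ^ 2 < (1 + c) ^ 2 := by
        rw [div_lt_iff₀ (pow_pos h1 2)]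
        nlinarith [h4, mul_pos h1 h1cpos]
      nlinarith [h7, hc2]
  rw [hset, csSup_Ico hT0]
end

section
/- Let X, Y be Banach spaces, C ⊂ Y a nonempty closed convex cone, F:Ω→Y continuously Fréchet differentiable, x₀ ∈ Ω with rge T_{x₀} = Y where T_{x₀}d := F'(x₀)d - C. Suppose f is a majorant function for F at x₀, i.e. B(x₀,R) ⊆ Ω and ‖T_{x₀}^{-1}[F'(y)-F'(x)]‖ ≤ f'(‖x-x₀‖+‖y-x‖) - f'(‖x-x₀‖) for admissible x,y, with f(0)>0, f'(0)=-1, f' convex increasing. Then for any x with ‖x-x₀‖ ≤ t < R one has ‖T_{x₀}^{-1}F'(x)‖ ≤ 2 + f'(t). -/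
open Set ENNReal Pointwise

/-- The (inner) norm of a set: `inf{‖v‖ : v ∈ A}`, with value `⊤` when `A = ∅`. -/
noncomputable def setNormE {Y : Type*} [NormedAddCommGroup Y] (A : Set Y) : ℝ≥0∞ :=
  ⨅ v ∈ A, (‖v‖₊ : ℝ≥0∞)

/-- The inner norm of a set-valued mapping. -/
noncomputable def opNormE {X Y : Type*} [NormedAddCommGroup X] [NormedAddCommGroup Y]
    (T : X → Set Y) : ℝ≥0∞ :=
  ⨆ d ∈ {d : X | (T d).Nonempty ∧ ‖d‖ ≤ 1}, setNormE (T d)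

/-- under Robinson's condition and the affine invariant majorant
condition, `‖T_{x₀}⁻¹ F'(x)‖ ≤ 2 + f'(t)` whenever `‖x - x₀‖ ≤ t < R`. -/
theorem stmt18 {X Y : Type*} [NormedAddCommGroup X] [NormedSpace ℝ X] [CompleteSpace X]
    [NormedAddCommGroup Y] [NormedSpace ℝ Y] [CompleteSpace Y]
    (Ω : Set X) (hΩ : IsOpen Ω)
    (C : Set Y) (hCne : C.Nonempty) (hCcl : IsClosed C) (hCconv : Convex ℝ C)
    (hCcone : ∀ c : ℝ, 0 ≤ c → ∀ y ∈ C, c • y ∈ C)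
    (F : X → Y) (F' : X → X →L[ℝ] Y)
    (hF : ∀ x ∈ Ω, HasFDerivAt F (F' x) x) (hF'cont : ContinuousOn F' Ω)
    (x₀ : X) (hx₀ : x₀ ∈ Ω)
    (hRobinson : ∀ y : Y, ∃ d : X, F' x₀ d - y ∈ C)
    (R : ℝ) (hR : 0 < R) (hball : Metric.ball x₀ R ⊆ Ω)
    (f f' : ℝ → ℝ)
    (hderiv : ∀ t ∈ Ico (0:ℝ) R, HasDerivWithinAt f (f' t) (Ico 0 R) t)
    (hcont : ContinuousOn f' (Ico 0 R))
    (h1 : 0 < f 0) (h1' : f' 0 = -1)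
    (h2conv : ConvexOn ℝ (Ico 0 R) f')
    (h2mono : StrictMonoOn f' (Ico 0 R))
    (hmaj : ∀ x y : X, x ∈ Metric.ball x₀ R → y ∈ Metric.ball x₀ R →
      ‖x - x₀‖ + ‖y - x‖ < R →
      opNormE (fun d : X => {e : X | F' x₀ e - (F' y d - F' x d) ∈ C}) ≤
        ENNReal.ofReal (f' (‖x - x₀‖ + ‖y - x‖) - f' ‖x - x₀‖))
    (x : X) (t : ℝ) (hxt : ‖x - x₀‖ ≤ t) (htR : t < R) :
    opNormE (fun d : X => {e : X | F' x₀ e - F' x d ∈ C}) ≤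
      ENNReal.ofReal (2 + f' t) := by
  have hs : ‖x - x₀‖ < R := lt_of_le_of_lt hxt htR
  have h0mem : (0:ℝ) ∈ Ico (0:ℝ) R := ⟨le_refl _, hR⟩
  have hsmem : ‖x - x₀‖ ∈ Ico (0:ℝ) R := ⟨norm_nonneg _, hs⟩
  have htmem : t ∈ Ico (0:ℝ) R := ⟨le_trans (norm_nonneg _) hxt, htR⟩
  have hmono := h2mono.monotoneOn
  have hfs1 : (0:ℝ) ≤ f' ‖x - x₀‖ + 1 := by
    have := hmono h0mem hsmem (norm_nonneg _); linarith [h1']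
  have hxball : x ∈ Metric.ball x₀ R := by rwa [Metric.mem_ball, dist_eq_norm]
  have hmaj' := hmaj x₀ x (Metric.mem_ball_self hR) hxball (by simpa using hs)
  simp only [sub_self, norm_zero, zero_add, h1', sub_neg_eq_add] at hmaj'
  rw [opNormE]
  apply iSup₂_le
  intro d hd
  obtain ⟨hdne, hd1⟩ := hd
  calc setNormE {e : X | F' x₀ e - F' x d ∈ C}
      ≤ (‖d‖₊ : ℝ≥0∞) + setNormE {e : X | F' x₀ e - (F' x d - F' x₀ d) ∈ C} := by
        rw [setNormE, setNormE]
        simp only [ENNReal.add_iInf]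
        refine le_iInf₂ fun e' he' => ?_
        refine iInf₂_le_of_le (d + e') ?_ ?_
        · have h : F' x₀ (d + e') - F' x d = F' x₀ e' - (F' x d - F' x₀ d) := by
            rw [map_add]; abel
          show F' x₀ (d + e') - F' x d ∈ C
          rw [h]; exact he'
        · exact_mod_cast nnnorm_add_le d e' 
    _ ≤ 1 + ENNReal.ofReal (f' ‖x - x₀‖ + 1) := by
        refine add_le_add ?_ ?_
        · have h1d : ‖d‖₊ ≤ (1 : NNReal) := hd1
          exact_mod_cast h1d
        · refine le_trans ?_ hmaj'
          exact le_iSup₂_of_le d ⟨hRobinson _, hd1⟩ le_rfl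
    _ = ENNReal.ofReal (2 + f' ‖x - x₀‖) := by
        rw [← ENNReal.ofReal_one, ← ENNReal.ofReal_add (by norm_num) hfs1]
        ring_nf
    _ ≤ ENNReal.ofReal (2 + f' t) := by
        refine ENNReal.ofReal_le_ofReal ?_
        have := hmono hsmem htmem hxt; linarith
end

section
/- Let f be a majorant function for F at x₀ (affine invariant majorant condition with Robinson's condition rge T_{x₀} = Y). If y ∈ B(x₀,R) then ‖T_{x₀}^{-1}[-F(y)]‖ ≤ f(‖y-x₀‖) + 2‖y-x₀‖. -/
open Set ENNReal Pointwise Filter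

lemma setNormE_select {Y : Type*} [NormedAddCommGroup Y] {s : Set Y} {b ε : ℝ}
    (h : setNormE s ≤ ENNReal.ofReal b) (hb : 0 ≤ b) (hε : 0 < ε) :
    ∃ v ∈ s, ‖v‖ < b + ε := by
  have hlt : setNormE s < ENNReal.ofReal (b + ε) :=
    h.trans_lt (ENNReal.ofReal_lt_ofReal_iff (by linarith)|>.2 (by linarith))
  by_contra hcon
  push_neg at hcon
  have : ENNReal.ofReal (b + ε) ≤ setNormE s := by
    refine le_iInf₂ fun v hv => ?_
    rw [show (‖v‖₊ : ℝ≥0∞) = ENNReal.ofReal ‖v‖ from (ofReal_norm v).symm]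
    exact ENNReal.ofReal_le_ofReal (hcon v hv)
  exact absurd hlt this.not_gt

section RU
variable {X Y : Type*} [NormedAddCommGroup X] [NormedSpace ℝ X] [CompleteSpace X]
  [NormedAddCommGroup Y] [NormedSpace ℝ Y] [CompleteSpace Y]

omit [CompleteSpace X] [CompleteSpace Y] in
lemma convexS (C : Set Y) (hCconv : Convex ℝ C) (A : X →L[ℝ] Y) :
    Convex ℝ {w : Y | ∃ d c, ‖d‖ ≤ 1 ∧ c ∈ C ∧ w = A d - c} := by
  rintro w₁ ⟨d₁, c₁, hd₁, hc₁, rfl⟩ w₂ ⟨d₂, c₂, hd₂, hc₂, rfl⟩ a b ha hb hab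
  refine ⟨a • d₁ + b • d₂, a • c₁ + b • c₂, ?_, hCconv hc₁ hc₂ ha hb hab, ?_⟩
  · calc ‖a • d₁ + b • d₂‖ ≤ ‖a • d₁‖ + ‖b • d₂‖ := norm_add_le _ _
      _ ≤ a * 1 + b * 1 := by
          rw [norm_smul, norm_smul, Real.norm_of_nonneg ha, Real.norm_of_nonneg hb]
          gcongr
      _ = 1 := by linarith
  · simp only [map_add, map_smul, smul_sub]
    abel

omit [CompleteSpace X] in
lemma exists_approx (C : Set Y) (hC0 : (0:Y) ∈ C) (hCconv : Convex ℝ C)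
    (hCcone : ∀ c : ℝ, 0 ≤ c → ∀ y ∈ C, c • y ∈ C)
    (A : X →L[ℝ] Y) (hsurj : ∀ y : Y, ∃ d : X, A d - y ∈ C) :
    ∃ K ≥ (0:ℝ), ∀ z : Y, ∀ δ > (0:ℝ), ∃ d c, c ∈ C ∧ ‖d‖ ≤ K * ‖z‖ ∧
      ‖z - (A d - c)‖ ≤ δ := by
  set S : Set Y := {w : Y | ∃ d c, ‖d‖ ≤ 1 ∧ c ∈ C ∧ w = A d - c} with hS
  have hSscale : ∀ t : ℝ, 0 ≤ t → t ≤ 1 → ∀ s ∈ S, t • s ∈ S := by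
    rintro t ht ht1 s ⟨d, c, hd, hc, rfl⟩
    refine ⟨t • d, t • c, ?_, hCcone t ht c hc, by simp [smul_sub]⟩
    rw [norm_smul, Real.norm_of_nonneg ht]
    calc t * ‖d‖ ≤ 1 * 1 := by gcongr
      _ = 1 := one_mul 1
  have habs : ∀ v : Y, ∃ m : ℕ, 0 < m ∧ (m : ℝ)⁻¹ • v ∈ S := by
    intro v
    obtain ⟨d, hd⟩ := hsurj v
    obtain ⟨m, hm⟩ := exists_nat_gt (max ‖d‖ 1)
    have hm1 : (1:ℝ) ≤ m := le_trans (le_max_right _ _) hm.le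
    have hmpos : (0:ℝ) < m := lt_of_lt_of_le one_pos hm1
    refine ⟨m, by exact_mod_cast hmpos, (m:ℝ)⁻¹ • d, (m:ℝ)⁻¹ • (A d - v), ?_,
      hCcone _ (by positivity) _ hd, by simp [smul_sub]⟩
    rw [norm_smul, Real.norm_of_nonneg (by positivity)]
    rw [inv_mul_le_one₀ hmpos]
    exact le_trans (le_max_left _ _) hm.le |>.trans (by linarith)
  have hcover : (⋃ n : ℕ, {w : Y | ((n:ℝ)+1)⁻¹ • w ∈ closure S}) = univ := by
    refine eq_univ_of_forall fun v => ?_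
    obtain ⟨m, hm, hmem⟩ := habs v
    refine mem_iUnion.2 ⟨m, ?_⟩
    have hmpos : (0:ℝ) < m := by exact_mod_cast hm
    have : ((m:ℝ)+1)⁻¹ • v = ((m:ℝ)/((m:ℝ)+1)) • ((m:ℝ)⁻¹ • v) := by
      rw [smul_smul]; congr 1; field_simp
    rw [mem_setOf_eq, this]
    exact subset_closure (hSscale _ (by positivity) (by
      rw [div_le_one (by positivity)]; linarith) _ hmem)
  have hclosed : ∀ n : ℕ, IsClosed {w : Y | ((n:ℝ)+1)⁻¹ • w ∈ closure S} :=
    fun n => isClosed_closure.preimage (continuous_const_smul _)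
  obtain ⟨n, x, hx⟩ := nonempty_interior_of_iUnion_of_closed hclosed hcover
  rw [mem_interior_iff_mem_nhds, Metric.mem_nhds_iff] at hx
  obtain ⟨ε, εpos, hball⟩ := hx
  have hnpos : (0:ℝ) < (n:ℝ) + 1 := by positivity
  set a : Y := ((n:ℝ)+1)⁻¹ • x with ha
  have hball2 : ∀ w : Y, ‖w - a‖ < ((n:ℝ)+1)⁻¹ * ε → w ∈ closure S := by
    intro w hw
    have : (((n:ℝ)+1) • w) ∈ Metric.ball x ε := by
      rw [Metric.mem_ball, dist_eq_norm]
      have : ((n:ℝ)+1) • w - x = ((n:ℝ)+1) • (w - a) := by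
        rw [smul_sub, ha, smul_smul, mul_inv_cancel₀ hnpos.ne', one_smul]
      rw [this, norm_smul, Real.norm_of_nonneg hnpos.le]
      calc ((n:ℝ)+1) * ‖w - a‖ < ((n:ℝ)+1) * (((n:ℝ)+1)⁻¹ * ε) := by gcongr
        _ = ε := by field_simp
    have := hball this
    rw [mem_setOf_eq, smul_smul, inv_mul_cancel₀ hnpos.ne', one_smul] at this
    exact this
  obtain ⟨m, hm, hmem⟩ := habs (-a)
  have hmpos : (0:ℝ) < m := by exact_mod_cast hm
  have hcS : Convex ℝ (closure S) := (convexS C hCconv A).closure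
  set ε₀ : ℝ := (((n:ℝ)+1)⁻¹ * ε) / ((m:ℝ)+1) with hε₀
  have hε₀pos : 0 < ε₀ := by positivity
  have hzero : ∀ w : Y, ‖w‖ < ε₀ → w ∈ closure S := by
    intro w hw
    have h1 : a + ((m:ℝ)+1) • w ∈ closure S := by
      apply hball2
      rw [add_sub_cancel_left, norm_smul, Real.norm_of_nonneg (by positivity)]
      calc ((m:ℝ)+1) * ‖w‖ < ((m:ℝ)+1) * ε₀ := by gcongr
        _ = ((n:ℝ)+1)⁻¹ * ε := by rw [hε₀]; field_simp
    have h2 : (m:ℝ)⁻¹ • (-a) ∈ closure S := subset_closure hmem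
    have := hcS h1 h2 (a := ((m:ℝ)+1)⁻¹) (b := (m:ℝ)/((m:ℝ)+1))
      (by positivity) (by positivity) (by field_simp; ring)
    have heq : ((m:ℝ)+1)⁻¹ • (a + ((m:ℝ)+1) • w) + ((m:ℝ)/((m:ℝ)+1)) • ((m:ℝ)⁻¹ • (-a)) = w := by
      match_scalars <;> (field_simp; try ring)
    rwa [heq] at this
  refine ⟨2/ε₀, by positivity, fun z δ hδ => ?_⟩
  rcases eq_or_ne z 0 with rfl | hz
  · exact ⟨0, 0, hC0, by simp, by simpa using hδ.le⟩
  have hzpos : 0 < ‖z‖ := norm_pos_iff.2 hz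
  set w : Y := (ε₀/(2*‖z‖)) • z with hwdef
  have hwnorm : ‖w‖ < ε₀ := by
    rw [hwdef, norm_smul, Real.norm_of_nonneg (by positivity)]
    rw [div_mul_eq_mul_div, mul_comm]
    rw [div_lt_iff₀ (by positivity)]
    nlinarith
  have hwcl := hzero w hwnorm
  have hδ' : 0 < (ε₀/(2*‖z‖)) * δ := by positivity
  obtain ⟨s, hsS, hsd⟩ := Metric.mem_closure_iff.1 hwcl _ hδ'
  obtain ⟨d, c, hd, hc, rfl⟩ := hsS
  set lam : ℝ := 2*‖z‖/ε₀ with hlam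
  have hlampos : 0 < lam := by positivity
  refine ⟨lam • d, lam • c, hCcone _ hlampos.le _ hc, ?_, ?_⟩
  · rw [norm_smul, Real.norm_of_nonneg hlampos.le]
    calc lam * ‖d‖ ≤ lam * 1 := by gcongr
      _ = 2/ε₀ * ‖z‖ := by rw [hlam]; ring
  · have hzw : z = lam • w := by
      rw [hwdef, smul_smul, hlam]
      rw [show 2*‖z‖/ε₀ * (ε₀/(2*‖z‖)) = 1 by field_simp]
      rw [one_smul]
    have : z - (A (lam • d) - lam • c) = lam • (w - (A d - c)) := by
      rw [smul_sub, smul_sub, map_smul, ← hzw]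
    rw [this, norm_smul, Real.norm_of_nonneg hlampos.le]
    rw [dist_eq_norm] at hsd
    calc lam * ‖w - (A d - c)‖ ≤ lam * ((ε₀/(2*‖z‖)) * δ) := by
          exact mul_le_mul_of_nonneg_left hsd.le hlampos.le
      _ = δ := by rw [hlam]; field_simp

omit [CompleteSpace Y] in
/-- Iteration step of the open mapping theorem for convex processes. -/
lemma iterate_approx (C : Set Y) (A : X →L[ℝ] Y)
    (hC0 : (0:Y) ∈ C) (hCadd : ∀ a ∈ C, ∀ b ∈ C, a + b ∈ C)
    (hCcl : IsClosed C) (K : ℝ) (hK : 0 ≤ K)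
    (happrox : ∀ z : Y, ∀ δ > (0:ℝ), ∃ d c, c ∈ C ∧ ‖d‖ ≤ K * ‖z‖ ∧ ‖z - (A d - c)‖ ≤ δ)
    (v : Y) : ∃ d, A d - v ∈ C ∧ ‖d‖ ≤ (2*K+1) * ‖v‖ := by
  rcases eq_or_ne v 0 with rfl | hv
  · exact ⟨0, by simpa using hC0, by simp⟩
  have hvpos : 0 < ‖v‖ := norm_pos_iff.2 hv
  have hstep : ∀ (z : Y) (k : ℕ), ∃ d c, c ∈ C ∧ ‖d‖ ≤ K * ‖z‖ ∧
      ‖z - (A d - c)‖ ≤ ‖v‖ * (2 ^ (k+1))⁻¹ := by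
    intro z k
    exact happrox z _ (by positivity)
  choose dd cc hcmem hdnorm hres using hstep
  obtain ⟨W, hW0, hWs⟩ : ∃ W : ℕ → Y, W 0 = v ∧
      ∀ k, W (k+1) = W k - (A (dd (W k) k) - cc (W k) k) :=
    ⟨fun n => Nat.rec v (fun k wk => wk - (A (dd wk k) - cc wk k)) n, rfl, fun k => rfl⟩
  have hWnorm : ∀ k, ‖W k‖ ≤ ‖v‖ * (2 ^ k)⁻¹ := by
    intro k
    cases k with
    | zero => simp [hW0]
    | succ k => rw [hWs k]; exact hres (W k) k
  set D : ℕ → X := fun k => dd (W k) k with hD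
  have hDnorm : ∀ k, ‖D k‖ ≤ K * ‖v‖ * (2 ^ k)⁻¹ := by
    intro k
    calc ‖D k‖ ≤ K * ‖W k‖ := hdnorm _ _
    _ ≤ K * (‖v‖ * (2 ^ k)⁻¹) := by
        apply mul_le_mul_of_nonneg_left (hWnorm k) hK
    _ = K * ‖v‖ * (2 ^ k)⁻¹ := by ring
  have hgeo : Summable (fun k : ℕ => K * ‖v‖ * (2 ^ k)⁻¹) := by
    simpa [div_eq_mul_inv] using (summable_geometric_two.mul_left (K * ‖v‖))
  have hDsum : Summable D := by
    apply Summable.of_norm_bounded hgeo hDnorm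
  set d : X := ∑' k, D k with hd
  have hDnormsum : Summable (fun k => ‖D k‖) :=
    Summable.of_nonneg_of_le (fun _ => norm_nonneg _) hDnorm hgeo
  have hdnorm2 : ‖d‖ ≤ 2 * K * ‖v‖ := by
    calc ‖d‖ ≤ ∑' k, ‖D k‖ := norm_tsum_le_tsum_norm hDnormsum
      _ ≤ ∑' k, K * ‖v‖ * (2 ^ k)⁻¹ := Summable.tsum_le_tsum hDnorm hDnormsum hgeo
      _ = K * ‖v‖ * ∑' k : ℕ, (2 ^ k : ℝ)⁻¹ := by rw [tsum_mul_left]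
      _ = K * ‖v‖ * 2 := by
          rw [show ∑' k : ℕ, ((2:ℝ) ^ k)⁻¹ = 2 from by
            simpa [one_div, inv_pow] using tsum_geometric_two]
      _ = 2 * K * ‖v‖ := by ring
  have hpartial : ∀ n, ∑ k ∈ Finset.range n, (A (D k) - cc (W k) k) = v - W n := by
    intro n
    induction n with
    | zero => simp [hW0]
    | succ n ih => rw [Finset.sum_range_succ, ih, hWs n]; abel
  have hcpartial : ∀ n, ∑ k ∈ Finset.range n, cc (W k) k
      = A (∑ k ∈ Finset.range n, D k) - v + W n := by
    intro n
    have := hpartial n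
    rw [Finset.sum_sub_distrib] at this
    rw [map_sum]
    linear_combination (norm := abel) -this
  have htend1 : Tendsto (fun n => ∑ k ∈ Finset.range n, D k) atTop (nhds d) :=
    hDsum.hasSum.tendsto_sum_nat
  have htendW : Tendsto W atTop (nhds 0) := by
    apply squeeze_zero_norm hWnorm
    have : Tendsto (fun k : ℕ => ‖v‖ * (2 ^ k)⁻¹) atTop (nhds (‖v‖ * 0)) := by
      apply Filter.Tendsto.const_mul
      simpa [one_div, inv_pow] using tendsto_pow_atTop_nhds_zero_of_lt_one
        (by norm_num : (0:ℝ) ≤ 1/2) (by norm_num : (1/2:ℝ) < 1)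
    simpa using this
  have htendc : Tendsto (fun n => ∑ k ∈ Finset.range n, cc (W k) k) atTop
      (nhds (A d - v)) := by
    have : Tendsto (fun n => A (∑ k ∈ Finset.range n, D k) - v + W n) atTop
        (nhds (A d - v + 0)) :=
      ((A.continuous.tendsto d |>.comp htend1).sub_const v).add htendW
    simpa [hcpartial] using this
  have hmem : A d - v ∈ C := by
    refine hCcl.mem_of_tendsto htendc (Filter.Eventually.of_forall fun n => ?_)
    induction n with
    | zero => simpa using hC0
    | succ n ih => rw [Finset.sum_range_succ]; exact hCadd _ ih _ (hcmem _ _)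
  exact ⟨d, hmem, hdnorm2.trans (by nlinarith [norm_nonneg v])⟩

end RU

set_option maxHeartbeats 2000000 in
/-- under the affine invariant majorant condition with Robinson's
condition, if `y ∈ B(x₀, R)` then `‖T_{x₀}⁻¹[-F(y)]‖ ≤ f(‖y-x₀‖) + 2‖y-x₀‖`. -/
theorem stmt19 {X Y : Type*} [NormedAddCommGroup X] [NormedSpace ℝ X] [CompleteSpace X]
    [NormedAddCommGroup Y] [NormedSpace ℝ Y] [CompleteSpace Y]
    (Ω : Set X) (hΩ : IsOpen Ω)
    (C : Set Y) (hCne : C.Nonempty) (hCcl : IsClosed C) (hCconv : Convex ℝ C)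
    (hCcone : ∀ c : ℝ, 0 ≤ c → ∀ y ∈ C, c • y ∈ C)
    (F : X → Y) (F' : X → X →L[ℝ] Y)
    (hF : ∀ x ∈ Ω, HasFDerivAt F (F' x) x) (hF'cont : ContinuousOn F' Ω)
    (x₀ : X) (hx₀ : x₀ ∈ Ω)
    (hRobinson : ∀ y : Y, ∃ d : X, F' x₀ d - y ∈ C)
    (R : ℝ) (hR : 0 < R) (hball : Metric.ball x₀ R ⊆ Ω)
    (f f' : ℝ → ℝ)
    (hderiv : ∀ t ∈ Ico (0:ℝ) R, HasDerivWithinAt f (f' t) (Ico 0 R) t)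
    (hcont : ContinuousOn f' (Ico 0 R))
    (h1 : 0 < f 0) (h1' : f' 0 = -1)
    (h2conv : ConvexOn ℝ (Ico 0 R) f')
    (h2mono : StrictMonoOn f' (Ico 0 R))
    (hstart : setNormE {d : X | F' x₀ d - (-(F x₀)) ∈ C} ≤ ENNReal.ofReal (f 0))
    (hmaj : ∀ x y : X, x ∈ Metric.ball x₀ R → y ∈ Metric.ball x₀ R →
      ‖x - x₀‖ + ‖y - x‖ < R →
      opNormE (fun d : X => {e : X | F' x₀ e - (F' y d - F' x d) ∈ C}) ≤
        ENNReal.ofReal (f' (‖x - x₀‖ + ‖y - x‖) - f' ‖x - x₀‖))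
    (y : X) (hy : y ∈ Metric.ball x₀ R) :
    setNormE {d : X | F' x₀ d - (-(F y)) ∈ C} ≤
      ENNReal.ofReal (f ‖y - x₀‖ + 2 * ‖y - x₀‖) := by
  have hC0 : (0:Y) ∈ C := by
    obtain ⟨c₀, hc₀⟩ := hCne
    simpa using hCcone 0 le_rfl c₀ hc₀
  have hCadd : ∀ a ∈ C, ∀ b ∈ C, a + b ∈ C := by
    intro a ha b hb
    have h2 := hCconv ha hb (by norm_num : (0:ℝ) ≤ 1/2) (by norm_num : (0:ℝ) ≤ 1/2)
      (by norm_num)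
    have := hCcone 2 (by norm_num) _ h2
    rwa [smul_add, smul_smul, smul_smul, show (2:ℝ)*(1/2)=1 by norm_num, one_smul,
      one_smul] at this
  set A : X →L[ℝ] Y := F' x₀ with hA
  obtain ⟨K, hK, happrox⟩ := exists_approx C hC0 hCconv hCcone A hRobinson
  set M : ℝ := 2*K+1 with hMdef
  have hM : 0 < M := by positivity
  have hRU : ∀ v : Y, ∃ d, A d - v ∈ C ∧ ‖d‖ ≤ M * ‖v‖ :=
    iterate_approx C A hC0 hCadd hCcl K hK happrox
  set r : ℝ := ‖y - x₀‖ with hrdef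
  have hr0 : 0 ≤ r := norm_nonneg _
  have hrR : r < R := by rwa [Metric.mem_ball, dist_eq_norm] at hy
  have hfmono : MonotoneOn f' (Ico 0 R) := h2mono.monotoneOn
  -- selection from the majorant condition
  have hsel : ∀ z, z ∈ Metric.ball x₀ R → ∀ v : X, ∀ ε' > (0:ℝ),
      ∃ e, A e - (F' z v - A v) ∈ C ∧ ‖e‖ ≤ (f' ‖z - x₀‖ + 1) * ‖v‖ + ε' := by
    intro z hz v ε' hε'
    have hzR : ‖z - x₀‖ < R := by rwa [Metric.mem_ball, dist_eq_norm] at hz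
    have hmono0 : f' 0 ≤ f' ‖z - x₀‖ :=
      hfmono ⟨le_rfl, hR⟩ ⟨norm_nonneg _, hzR⟩ (norm_nonneg _)
    have hb0 : 0 ≤ f' ‖z - x₀‖ - f' 0 := by linarith
    rcases eq_or_ne v 0 with rfl | hv
    · refine ⟨0, by simpa using hC0, ?_⟩
      simp only [norm_zero, mul_zero, zero_add]
      linarith
    have hvpos : 0 < ‖v‖ := norm_pos_iff.2 hv
    have hmaj' := hmaj x₀ z (Metric.mem_ball_self hR) hz (by simpa using hzR)
    simp only [sub_self, norm_zero, zero_add] at hmaj'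
    set dv : X := ‖v‖⁻¹ • v with hdv
    have hdv1 : ‖dv‖ = 1 := by
      rw [hdv, norm_smul, norm_inv, norm_norm, inv_mul_cancel₀ hvpos.ne']
    have hne : {e : X | A e - (F' z dv - A dv) ∈ C}.Nonempty := hRobinson _
    have hle : setNormE {e : X | A e - (F' z dv - A dv) ∈ C}
        ≤ ENNReal.ofReal (f' ‖z - x₀‖ - f' 0) := by
      refine le_trans ?_ hmaj'
      exact le_iSup₂ (f := fun d _ => setNormE {e : X | A e - (F' z d - A d) ∈ C}) dv
        ⟨hne, hdv1.le⟩
    obtain ⟨e', he'mem, he'n⟩ := setNormE_select hle hb0 (by positivity : 0 < ε'/‖v‖)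
    refine ⟨‖v‖ • e', ?_, ?_⟩
    · have hmem := hCcone ‖v‖ (norm_nonneg v) _ he'mem
      have heq : ‖v‖ • (A e' - (F' z dv - A dv)) = A (‖v‖ • e') - (F' z v - A v) := by
        simp only [hdv, smul_sub, map_smul, smul_smul, mul_inv_cancel₀ hvpos.ne', one_smul]
      rwa [heq] at hmem
    · rw [norm_smul, norm_norm]
      calc ‖v‖ * ‖e'‖ ≤ ‖v‖ * ((f' ‖z - x₀‖ - f' 0) + ε'/‖v‖) := by
            exact mul_le_mul_of_nonneg_left he'n.le (norm_nonneg v)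
        _ = (f' ‖z - x₀‖ - f' 0) * ‖v‖ + ε' := by field_simp; try ring
        _ = (f' ‖z - x₀‖ + 1) * ‖v‖ + ε' := by rw [h1']; ring
  -- main ε-approximation
  have main : ∀ ε > (0:ℝ), ∃ d, A d - (-(F y)) ∈ C ∧ ‖d‖ ≤ f r + 2*r + ε := by
    intro ε hε
    rcases eq_or_lt_of_le hr0 with hreq | hrpos
    · -- y = x₀
      have hyx : y = x₀ := by
        have h0 : ‖y - x₀‖ = 0 := hreq.symm
        rwa [norm_eq_zero, sub_eq_zero] at h0
      obtain ⟨d₀, hd₀mem, hd₀⟩ := setNormE_select hstart h1.le hε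
      refine ⟨d₀, by rw [hyx]; exact hd₀mem, ?_⟩
      rw [← hreq]
      simpa using hd₀.le.trans (by linarith)
    · set u : X := y - x₀ with hu
      have hunorm : ‖u‖ = r := rfl
      set φ : ℝ → X →L[ℝ] Y := fun s => F' (x₀ + s • u) with hφ
      have hmemball : ∀ s ∈ Icc (0:ℝ) 1, x₀ + s • u ∈ Metric.ball x₀ R := by
        intro s hs
        rw [Metric.mem_ball, dist_eq_norm, add_sub_cancel_left, norm_smul,
          Real.norm_of_nonneg hs.1]
        calc s * ‖u‖ ≤ 1 * r := by
              rw [hunorm]; exact mul_le_mul_of_nonneg_right hs.2 hr0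
          _ = r := one_mul r
          _ < R := hrR
      have hφc : ContinuousOn φ (Icc 0 1) := by
        apply hF'cont.comp
        · exact (continuous_const.add (continuous_id.smul continuous_const)).continuousOn
        · exact fun s hs => hball (hmemball s hs)
      have huc := isCompact_Icc.uniformContinuousOn_of_continuous hφc
      rw [Metric.uniformContinuousOn_iff] at huc
      set κ : ℝ := ε / (4*M*(r+1)) with hκ
      have hκpos : 0 < κ := by positivity
      obtain ⟨δ, hδpos, hδ⟩ := huc κ hκpos
      obtain ⟨n₀, hn₀⟩ := exists_nat_one_div_lt hδpos
      set n : ℕ := n₀ + 1 with hn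
      have hnpos : (0:ℝ) < (n:ℝ) := by
        rw [hn]; push_cast; positivity
      have hne0 : (n:ℝ) ≠ 0 := hnpos.ne'
      have hstep : (1:ℝ)/(n:ℝ) < δ := by rw [hn]; push_cast; exact hn₀
      set g : ℝ → Y := fun s => F (x₀ + s • u) with hg
      have hgd : ∀ s ∈ Icc (0:ℝ) 1, HasDerivAt g (φ s u) s := by
        intro s hs
        have h1d : HasDerivAt (fun t : ℝ => x₀ + t • u) u s := by
          simpa using ((hasDerivAt_id s).smul_const u).const_add x₀
        exact (hF _ (hball (hmemball s hs))).comp_hasDerivAt s h1d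
      have hterm : ∀ i, i < n → ‖g (((i:ℝ)+1)/n) - g ((i:ℝ)/n) - (n:ℝ)⁻¹ • (φ ((i:ℝ)/n) u)‖
          ≤ κ * r * (n:ℝ)⁻¹ := by
        intro i hi
        set a : ℝ := (i:ℝ)/n with hadef
        set b : ℝ := ((i:ℝ)+1)/n with hbdef
        have hin : (i:ℝ) + 1 ≤ (n:ℝ) := by exact_mod_cast hi
        have ha0 : 0 ≤ a := by positivity
        have hb1 : b ≤ 1 := by
          rw [hbdef, div_le_one hnpos]; exact hin
        have hab : a ≤ b := by
          rw [hadef, hbdef]; gcongr; linarith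
        have hba : b - a = (n:ℝ)⁻¹ := by
          rw [hadef, hbdef]; field_simp; ring
        have hsub : Icc a b ⊆ Icc (0:ℝ) 1 := Icc_subset_Icc ha0 hb1
        have hd2 : ∀ s ∈ Icc a b, HasDerivWithinAt (fun t => g t - t • (φ a u))
            (φ s u - φ a u) (Icc a b) s := by
          intro s hs
          exact ((hgd s (hsub hs)).sub
            (by simpa using ((hasDerivAt_id s).smul_const (φ a u)))).hasDerivWithinAt
        have hbound : ∀ s ∈ Icc a b, ‖φ s u - φ a u‖ ≤ κ * r := by
          intro s hs
          have hd3 : dist (φ s) (φ a) < κ := by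
            apply hδ s (hsub hs) a (hsub (left_mem_Icc.2 hab))
            rw [Real.dist_eq]
            calc |s - a| = s - a := abs_of_nonneg (sub_nonneg.2 hs.1)
              _ ≤ b - a := by linarith [hs.2]
              _ = (n:ℝ)⁻¹ := hba
              _ < δ := by rw [← one_div]; exact hstep
          rw [dist_eq_norm] at hd3
          calc ‖φ s u - φ a u‖ = ‖(φ s - φ a) u‖ := by
                rw [ContinuousLinearMap.sub_apply]
            _ ≤ ‖φ s - φ a‖ * ‖u‖ := ContinuousLinearMap.le_opNorm _ _
            _ ≤ κ * r := by
                rw [hunorm]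
                exact mul_le_mul_of_nonneg_right hd3.le hr0
        have hMVT := (convex_Icc a b).norm_image_sub_le_of_norm_hasDerivWithin_le hd2 hbound
          (left_mem_Icc.2 hab) (right_mem_Icc.2 hab)
        have hrw : g b - b • (φ a u) - (g a - a • (φ a u))
            = g b - g a - (n:ℝ)⁻¹ • (φ a u) := by
          rw [show g b - b • (φ a u) - (g a - a • (φ a u))
            = g b - g a - (b - a) • (φ a u) from by rw [sub_smul]; abel, hba]
        rw [hrw] at hMVT
        calc ‖g b - g a - (n:ℝ)⁻¹ • (φ a u)‖ ≤ κ * r * ‖b - a‖ := hMVT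
          _ = κ * r * (n:ℝ)⁻¹ := by
              rw [hba, Real.norm_of_nonneg (by positivity)]
      -- Riemann-sum estimate via MVT
      have hfc : ContinuousOn f (Ico 0 R) := fun t ht => (hderiv t ht).continuousWithinAt
      have hRie : ∑ i ∈ Finset.range n, f' ((i:ℝ)*r/n) * (r/n) ≤ f r - f 0 := by
        have hper : ∀ i ∈ Finset.range n, f' ((i:ℝ)*r/n) * (r/n)
            ≤ f (((i:ℝ)+1)*r/n) - f ((i:ℝ)*r/n) := by
          intro i hi
          rw [Finset.mem_range] at hi
          set a : ℝ := (i:ℝ)*r/n with hadef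
          set b : ℝ := ((i:ℝ)+1)*r/n with hbdef
          have hin : (i:ℝ) + 1 ≤ (n:ℝ) := by exact_mod_cast hi
          have ha0 : 0 ≤ a := by positivity
          have hba : b - a = r/n := by rw [hadef, hbdef]; field_simp; ring
          have hab : a < b := by
            have : 0 < r/n := by positivity
            linarith
          have hbr : b ≤ r := by
            rw [hbdef]
            calc ((i:ℝ)+1)*r/n ≤ (n:ℝ)*r/n := by gcongr
              _ = r := by field_simp
          have hbR : b < R := lt_of_le_of_lt hbr hrR
          have hIccsub : Icc a b ⊆ Ico 0 R :=
            fun t ht => ⟨le_trans ha0 ht.1, lt_of_le_of_lt ht.2 hbR⟩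
          obtain ⟨ξ, hξ, hslope⟩ := exists_hasDerivAt_eq_slope f f' hab (hfc.mono hIccsub)
            (fun x hx => (hderiv x ⟨le_trans ha0 hx.1.le, lt_trans hx.2 hbR⟩).hasDerivAt
              (Ico_mem_nhds (lt_of_le_of_lt ha0 hx.1) (lt_trans hx.2 hbR)))
          have hmle : f' a ≤ f' ξ := hfmono ⟨ha0, hab.trans hbR⟩
            ⟨le_trans ha0 hξ.1.le, lt_trans hξ.2 hbR⟩ hξ.1.le
          rw [hslope] at hmle
          have := (le_div_iff₀ (by linarith : (0:ℝ) < b - a)).1 hmle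
          rw [hba] at this
          linarith
        calc ∑ i ∈ Finset.range n, f' ((i:ℝ)*r/n) * (r/n)
            ≤ ∑ i ∈ Finset.range n, (f (((i:ℝ)+1)*r/n) - f ((i:ℝ)*r/n)) :=
              Finset.sum_le_sum hper
          _ = f ((n:ℝ)*r/n) - f ((0:ℕ)*r/n) := by
              rw [← Finset.sum_range_sub (fun i : ℕ => f ((i:ℝ)*r/n))]
              apply Finset.sum_congr rfl
              intro i _
              push_cast
              ring_nf
          _ = f r - f 0 := by
              rw [show (n:ℝ)*r/n = r from by field_simp]
              norm_num
      -- components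
      obtain ⟨d₀, hd₀mem, hd₀⟩ := setNormE_select hstart h1.le
        (show (0:ℝ) < ε/4 by linarith)
      set v : X := (n:ℝ)⁻¹ • u with hv
      have hvnorm : ‖v‖ = (n:ℝ)⁻¹ * r := by
        rw [hv, norm_smul, Real.norm_of_nonneg (by positivity), hunorm]
      set z : ℕ → X := fun i => x₀ + ((i:ℝ)/n) • u with hz
      have hzball : ∀ i, i < n → z i ∈ Metric.ball x₀ R := by
        intro i hi
        refine hmemball _ ⟨by positivity, ?_⟩
        rw [div_le_one hnpos]
        exact_mod_cast hi.le
      have hznorm : ∀ i, ‖z i - x₀‖ = (i:ℝ)/n * r := by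
        intro i
        rw [hz]
        simp only []
        rw [add_sub_cancel_left, norm_smul, Real.norm_of_nonneg (by positivity), hunorm]
      have hesel : ∀ i ∈ Finset.range n, ∃ e, A e - (F' (z i) (-v) - A (-v)) ∈ C ∧
          ‖e‖ ≤ (f' ‖z i - x₀‖ + 1) * ‖-v‖ + ε/(4*n) := fun i hi =>
        hsel (z i) (hzball i (Finset.mem_range.1 hi)) (-v) (ε/(4*n)) (by positivity)
      choose! e hemem hen using hesel
      set ρ : Y := F y - F x₀ - ∑ i ∈ Finset.range n, (n:ℝ)⁻¹ • (φ ((i:ℝ)/n) u) with hρdef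
      have hρ : ‖ρ‖ ≤ κ * r := by
        have htele : ρ = ∑ i ∈ Finset.range n,
            (g (((i:ℝ)+1)/n) - g ((i:ℝ)/n) - (n:ℝ)⁻¹ • (φ ((i:ℝ)/n) u)) := by
          rw [Finset.sum_sub_distrib]
          have h1 : ∑ i ∈ Finset.range n, (g (((i:ℝ)+1)/n) - g ((i:ℝ)/n))
              = g ((n:ℝ)/n) - g ((0:ℕ)/n) := by
            rw [← Finset.sum_range_sub (fun i : ℕ => g ((i:ℝ)/n))]
            apply Finset.sum_congr rfl
            intro i _
            push_cast
            ring_nf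
          rw [h1, hρdef]
          congr 1
          rw [show ((n:ℝ)/n) = 1 from by field_simp]
          have hg1 : g 1 = F y := by
            rw [hg]; simp only []; rw [one_smul, hu]
            congr 1
            abel
          have hg0 : g ((0:ℕ)/n) = F x₀ := by
            rw [hg]; norm_num
          rw [hg1, hg0]
        rw [htele]
        calc ‖∑ i ∈ Finset.range n,
            (g (((i:ℝ)+1)/n) - g ((i:ℝ)/n) - (n:ℝ)⁻¹ • (φ ((i:ℝ)/n) u))‖
            ≤ ∑ i ∈ Finset.range n, (κ * r * (n:ℝ)⁻¹) :=
              (norm_sum_le _ _).trans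
                (Finset.sum_le_sum fun i hi => hterm i (Finset.mem_range.1 hi))
          _ = κ * r := by
              rw [Finset.sum_const, Finset.card_range, nsmul_eq_mul]
              field_simp
      obtain ⟨dρ, hdρmem, hdρn⟩ := hRU (-ρ)
      have hdρn' : ‖dρ‖ ≤ ε/4 := by
        rw [norm_neg] at hdρn
        calc ‖dρ‖ ≤ M * ‖ρ‖ := hdρn
          _ ≤ M * (κ * r) := mul_le_mul_of_nonneg_left hρ hM.le
          _ ≤ ε/4 := by
              have h4 : κ * (4 * M * (r+1)) = ε := by rw [hκ]; field_simp
              nlinarith [mul_pos hM hκpos, mul_nonneg (mul_nonneg hM.le hκpos.le) hr0]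
      set Dd : X := d₀ + (-u) + (∑ i ∈ Finset.range n, e i) + dρ with hDd
      have hsum : ∑ _i ∈ Finset.range n, A v = A u := by
        rw [Finset.sum_const, Finset.card_range, hv, map_smul,
          ← Nat.cast_smul_eq_nsmul ℝ, smul_smul, mul_inv_cancel₀ hne0, one_smul]
      have hsum2 : ∑ i ∈ Finset.range n, (F' (z i) v - A v)
          = (∑ i ∈ Finset.range n, (n:ℝ)⁻¹ • (φ ((i:ℝ)/n) u)) - A u := by
        rw [Finset.sum_sub_distrib, hsum]
        congr 1
        apply Finset.sum_congr rfl
        intro i _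
        rw [hv, map_smul]
      have key : A Dd - (-(F y)) =
          (A d₀ - (-(F x₀))) + (A (-u) - (-(A u)))
          + (∑ i ∈ Finset.range n, (A (e i) - (F' (z i) (-v) - A (-v))))
          + (A dρ - (-ρ)) := by
        have hterm2 : ∀ i ∈ Finset.range n,
            A (e i) - (F' (z i) (-v) - A (-v)) = A (e i) + (F' (z i) v - A v) := by
          intro i _
          rw [map_neg, map_neg]
          abel
        rw [Finset.sum_congr rfl hterm2, Finset.sum_add_distrib, hsum2]
        simp only [hDd, map_add, map_sum, map_neg, sub_neg_eq_add, hρdef]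
        abel
      have hmemD : A Dd - (-(F y)) ∈ C := by
        rw [key]
        refine hCadd _ (hCadd _ (hCadd _ hd₀mem _ ?_) _ ?_) _ hdρmem
        · have h0 : A (-u) - (-(A u)) = 0 := by rw [map_neg]; abel
          rw [h0]; exact hC0
        · exact Finset.sum_induction _ (· ∈ C) (fun a b ha hb => hCadd a ha b hb) hC0
            (fun i hi => hemem i hi)
      refine ⟨Dd, hmemD, ?_⟩
      have hDnorm : ‖Dd‖ ≤ ‖d₀‖ + ‖u‖ + (∑ i ∈ Finset.range n, ‖e i‖) + ‖dρ‖ := by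
        have t1 := norm_add_le (d₀ + (-u) + ∑ i ∈ Finset.range n, e i) dρ
        have t2 := norm_add_le (d₀ + (-u)) (∑ i ∈ Finset.range n, e i)
        have t3 := norm_add_le d₀ (-u)
        have t4 := norm_sum_le (Finset.range n) e
        rw [norm_neg] at t3
        rw [hDd]
        linarith
      have hesum : ∑ i ∈ Finset.range n, ‖e i‖ ≤ (f r - f 0) + r + ε/4 := by
        calc ∑ i ∈ Finset.range n, ‖e i‖
            ≤ ∑ i ∈ Finset.range n, (f' ((i:ℝ)*r/n) * (r/n) + (n:ℝ)⁻¹*r + ε/(4*n)) := by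
              apply Finset.sum_le_sum
              intro i hi
              have h5 := hen i hi
              rw [norm_neg, hvnorm, hznorm i] at h5
              calc ‖e i‖ ≤ (f' ((i:ℝ)/n*r) + 1) * ((n:ℝ)⁻¹ * r) + ε/(4*n) := h5
                _ = f' ((i:ℝ)*r/n) * (r/n) + (n:ℝ)⁻¹*r + ε/(4*n) := by
                    rw [show (i:ℝ)/n*r = (i:ℝ)*r/n from by ring]
                    field_simp
          _ = (∑ i ∈ Finset.range n, f' ((i:ℝ)*r/n) * (r/n))
              + (n:ℝ)*((n:ℝ)⁻¹*r) + (n:ℝ)*(ε/(4*n)) := by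
              rw [Finset.sum_add_distrib, Finset.sum_add_distrib, Finset.sum_const,
                Finset.sum_const, Finset.card_range, nsmul_eq_mul, nsmul_eq_mul]
          _ ≤ (f r - f 0) + r + ε/4 := by
              have e1 : (n:ℝ)*((n:ℝ)⁻¹*r) = r := by field_simp
              have e2 : (n:ℝ)*(ε/(4*n)) = ε/4 := by field_simp
              rw [e1, e2]
              linarith [hRie]
      calc ‖Dd‖ ≤ ‖d₀‖ + ‖u‖ + (∑ i ∈ Finset.range n, ‖e i‖) + ‖dρ‖ := hDnorm
        _ ≤ (f 0 + ε/4) + r + ((f r - f 0) + r + ε/4) + (ε/4) :=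
            add_le_add (add_le_add (add_le_add hd₀.le hunorm.le) hesum) hdρn'
        _ ≤ f r + 2*r + ε := by linarith
  refine ENNReal.le_of_forall_pos_le_add fun ε hε _ => ?_
  obtain ⟨d, hdmem, hdn⟩ := main ε (by exact_mod_cast hε)
  calc setNormE {d : X | F' x₀ d - (-(F y)) ∈ C} ≤ (‖d‖₊ : ℝ≥0∞) := iInf₂_le d hdmem
    _ = ENNReal.ofReal ‖d‖ := (ofReal_norm d).symm
    _ ≤ ENNReal.ofReal (f r + 2*r + ε) := ENNReal.ofReal_le_ofReal hdn
    _ ≤ ENNReal.ofReal (f r + 2*r) + ENNReal.ofReal ε := ENNReal.ofReal_add_le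
    _ = ENNReal.ofReal (f ‖y - x₀‖ + 2 * ‖y - x₀‖) + (ε : ℝ≥0∞) := by
        rw [ENNReal.ofReal_coe_nnreal]
end
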